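/- arXiv:1703.08638 — 9 statements merged into one kernel-verified Lean document; each statement's English description precedes it below -/
import Mathlib

section
/- Let a > 0, c > 0, μ < 0 and 0 < σ < −μ. Let M ∈ [M₀, 0), N > 0, τ = a + c·N, and suppose φ is continuous with φ(t) ∈ [M, N] for all t ∈ [−τ, 0]. Then every solution u of the SDDE satisfies u(t) ∈ (M, N) for all t > 0. -/
open Real Set Filter

/-- `M₀ = -a/c`. -/
noncomputable def Mzero (a c : ℝ) : ℝ := -a / c

/-- `N₀ = aσ/(cμ)`. -/
noncomputable def Nzero (a c μ σ : ℝ) : ℝ := a * σ / (c * μ)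

/-- A solution of the SDDE `u'(t) = μ u(t) + σ u(t - a - c u(t))` with history `φ`:
a continuous function equal to `φ` on `(-∞,0]`, differentiable on `(0,∞)` with
continuous derivative there, satisfying the SDDE for all `t > 0`. -/
def IsSDDESolution (a c μ σ : ℝ) (φ u : ℝ → ℝ) : Prop :=
  Continuous u ∧ (∀ t ≤ (0:ℝ), u t = φ t) ∧
  ContinuousOn (deriv u) (Set.Ioi (0:ℝ)) ∧
  ∀ t > (0:ℝ), HasDerivAt u (μ * u t + σ * u (t - a - c * u t)) t

/-- Boundedness of solutions (positive feedback case `0 < σ < -μ`). -/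
theorem sdde_bounds_positive_feedback
    (a c μ σ M N τ : ℝ) (φ u : ℝ → ℝ)
    (ha : 0 < a) (hc : 0 < c) (hμ : μ < 0) (hσ0 : 0 < σ) (hσμ : σ < -μ)
    (hM : M ∈ Set.Ico (Mzero a c) (0:ℝ)) (hN : 0 < N) (hτ : τ = a + c * N)
    (hφcont : Continuous φ)
    (hφ : ∀ t ∈ Set.Icc (-τ) (0:ℝ), φ t ∈ Set.Icc M N)
    (hu : IsSDDESolution a c μ σ φ u) :
    ∀ t > (0:ℝ), u t ∈ Set.Ioo M N := by
  obtain ⟨hucont, huφ, _hdc, huode⟩ := hu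
  have hμ' : (0:ℝ) < -μ := by linarith
  have hMneg : M < 0 := hM.2
  have hτpos : 0 < τ := by nlinarith
  have hcM : -a ≤ c * M := by
    have h1 : -a / c ≤ M := hM.1
    have := (div_le_iff₀ hc).mp h1
    linarith
  have hMN : M < N := lt_trans hMneg hN
  have hu0 : u 0 ∈ Set.Icc M N := by
    rw [huφ 0 le_rfl]; exact hφ 0 ⟨by linarith, le_rfl⟩
  -- the delayed-argument bound
  have hdelay : ∀ t₀ > (0:ℝ), (∀ s ∈ Set.Icc (0:ℝ) t₀, u s ∈ Set.Icc M N) →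
      ∀ t, 0 < t → t ≤ t₀ → u (t - a - c * u t) ∈ Set.Icc M N := by
    intro t₀ ht₀ hIcc t ht htt₀
    have hut : u t ∈ Set.Icc M N := hIcc t ⟨ht.le, htt₀⟩
    have hcut1 : c * M ≤ c * u t := by nlinarith [hut.1]
    have hcut2 : c * u t ≤ c * N := by nlinarith [hut.2]
    have hd1 : t - a - c * u t ≤ t₀ := by linarith
    have hd2 : -τ ≤ t - a - c * u t := by rw [hτ]; linarith
    by_cases hd0 : t - a - c * u t ≤ 0
    · rw [huφ _ hd0]; exact hφ _ ⟨hd2, hd0⟩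
    · exact hIcc _ ⟨le_of_lt (not_le.mp hd0), hd1⟩
  -- Gronwall-type core estimate
  have key : ∀ t₀ > (0:ℝ), (∀ s ∈ Set.Icc (0:ℝ) t₀, u s ∈ Set.Icc M N) →
      u t₀ ∈ Set.Ioo M N := by
    intro t₀ ht₀ hIcc
    have hμne : μ ≠ 0 := ne_of_lt hμ
    set K := σ * N / (-μ) with hK
    set L := σ * M / (-μ) with hL
    have hKN : K < N := by rw [hK, div_lt_iff₀ hμ']; nlinarith
    have hLM : M < L := by rw [hL, lt_div_iff₀ hμ']; nlinarith
    have hE1 : 1 < Real.exp (-μ * t₀) := by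
      have : (0:ℝ) < -μ * t₀ := by positivity
      calc (1:ℝ) = Real.exp 0 := by simp
        _ < Real.exp (-μ * t₀) := Real.exp_lt_exp.mpr this
    have hexp : ∀ t : ℝ, HasDerivAt (fun s => Real.exp (-μ * s)) (Real.exp (-μ * t) * -μ) t := by
      intro t
      have h1 : HasDerivAt (fun s : ℝ => -μ * s) (-μ) t := by
        simpa using (hasDerivAt_id t).const_mul (-μ)
      simpa using h1.exp
    have hucontOn : ContinuousOn u (Set.Icc (0:ℝ) t₀) := hucont.continuousOn
    have hexpcont : Continuous fun s : ℝ => Real.exp (-μ * s) :=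
      Real.continuous_exp.comp (continuous_const.mul continuous_id)
    -- upper bound
    have hup : u t₀ < N := by
      set g : ℝ → ℝ := fun t => (u t - K) * Real.exp (-μ * t) with hg
      have hgderiv : ∀ t ∈ Set.Ioo (0:ℝ) t₀, HasDerivAt g
          ((μ * u t + σ * u (t - a - c * u t)) * Real.exp (-μ * t)
            + (u t - K) * (Real.exp (-μ * t) * -μ)) t := by
        intro t ht
        exact ((huode t ht.1).sub_const K).mul (hexp t)
      have hganti : AntitoneOn g (Set.Icc (0:ℝ) t₀) := by
        apply antitoneOn_of_deriv_nonpos (convex_Icc _ _)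
          ((hucontOn.sub continuousOn_const).mul hexpcont.continuousOn)
        · rw [interior_Icc]
          intro t ht
          exact (hgderiv t ht).differentiableAt.differentiableWithinAt
        · rw [interior_Icc]
          intro t ht
          rw [show deriv ((u - fun x => σ * N / -μ) * fun s => Real.exp (-μ * s)) t = _ from (hgderiv t ht).deriv]
          have hud := hdelay t₀ ht₀ hIcc t ht.1 ht.2.le
          have hEt : (0:ℝ) < Real.exp (-μ * t) := Real.exp_pos _
          have hKμ : μ * K = -(σ * N) := by rw [hK]; field_simp
          nlinarith [mul_nonneg (mul_nonneg hEt.le hσ0.le) (sub_nonneg.2 hud.2)]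
      have h10 : g t₀ ≤ g 0 := hganti ⟨le_rfl, ht₀.le⟩ ⟨ht₀.le, le_rfl⟩ ht₀.le
      have hg0 : g 0 = u 0 - K := by simp [hg]
      rw [hg0] at h10
      by_contra hcon
      push_neg at hcon
      have h1 : 0 < u t₀ - K := by linarith
      have h2 : 0 < Real.exp (-μ * t₀) - 1 := by linarith
      have h3 : u 0 ≤ N := hu0.2
      simp only [hg] at h10
      nlinarith [mul_pos h1 h2]
    -- lower bound
    have hlow : M < u t₀ := by
      set g : ℝ → ℝ := fun t => (u t - L) * Real.exp (-μ * t) with hg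
      have hgderiv : ∀ t ∈ Set.Ioo (0:ℝ) t₀, HasDerivAt g
          ((μ * u t + σ * u (t - a - c * u t)) * Real.exp (-μ * t)
            + (u t - L) * (Real.exp (-μ * t) * -μ)) t := by
        intro t ht
        exact ((huode t ht.1).sub_const L).mul (hexp t)
      have hgmono : MonotoneOn g (Set.Icc (0:ℝ) t₀) := by
        apply monotoneOn_of_deriv_nonneg (convex_Icc _ _)
          ((hucontOn.sub continuousOn_const).mul hexpcont.continuousOn)
        · rw [interior_Icc]
          intro t ht
          exact (hgderiv t ht).differentiableAt.differentiableWithinAt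
        · rw [interior_Icc]
          intro t ht
          rw [show deriv ((u - fun x => σ * M / -μ) * fun s => Real.exp (-μ * s)) t = _ from (hgderiv t ht).deriv]
          have hud := hdelay t₀ ht₀ hIcc t ht.1 ht.2.le
          have hEt : (0:ℝ) < Real.exp (-μ * t) := Real.exp_pos _
          have hLμ : μ * L = -(σ * M) := by rw [hL]; field_simp
          nlinarith [mul_nonneg (mul_nonneg hEt.le hσ0.le) (sub_nonneg.2 hud.1)]
      have h10 : g 0 ≤ g t₀ := hgmono ⟨le_rfl, ht₀.le⟩ ⟨ht₀.le, le_rfl⟩ ht₀.le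
      have hg0 : g 0 = u 0 - L := by simp [hg]
      rw [hg0] at h10
      by_contra hcon
      push_neg at hcon
      have h1 : 0 < L - u t₀ := by linarith
      have h2 : 0 < Real.exp (-μ * t₀) - 1 := by linarith
      have h3 : M ≤ u 0 := hu0.1
      simp only [hg] at h10
      nlinarith [mul_pos h1 h2]
    exact ⟨hlow, hup⟩
  -- main argument
  intro t ht
  by_contra hmem
  set B : Set ℝ := {s : ℝ | 0 < s ∧ u s ∉ Set.Ioo M N} with hB
  have hBne : B.Nonempty := ⟨t, ht, hmem⟩
  have hBbdd : BddBelow B := ⟨0, fun b hb => hb.1.le⟩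
  set t₀ := sInf B with ht₀def
  have ht₀0 : 0 ≤ t₀ := le_csInf hBne fun b hb => hb.1.le
  have ht₀mem : u t₀ ∉ Set.Ioo M N := by
    have hclosed : IsClosed {s : ℝ | u s ∉ Set.Ioo M N} := by
      have : {s : ℝ | u s ∉ Set.Ioo M N} = (u ⁻¹' Set.Ioo M N)ᶜ := rfl
      rw [this]
      exact (isOpen_Ioo.preimage hucont).isClosed_compl
    have hsub : B ⊆ {s : ℝ | u s ∉ Set.Ioo M N} := fun b hb => hb.2
    have h1 : t₀ ∈ closure B := csInf_mem_closure hBne hBbdd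
    have h2 := closure_mono hsub h1
    rwa [hclosed.closure_eq] at h2
  have hpre : ∀ s, 0 < s → s < t₀ → u s ∈ Set.Ioo M N := by
    intro s hs hst
    by_contra h
    exact absurd (csInf_le hBbdd ⟨hs, h⟩) (not_le.mpr hst)
  rcases eq_or_lt_of_le ht₀0 with h0 | h0
  · -- t₀ = 0 : local analysis at 0
    -- find δ > 0 with u ∈ Ioo M N on (0, δ], contradiction with sInf B = 0
    have hgoal : ∃ δ > (0:ℝ), ∀ s, 0 < s → s ≤ δ → u s ∈ Set.Ioo M N := by
      have hFcont : Continuous fun s : ℝ => μ * u s + σ * u (s - a - c * u s) :=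
        (continuous_const.mul hucont).add (continuous_const.mul
          (hucont.comp ((continuous_id.sub continuous_const).sub (continuous_const.mul hucont))))
      rcases eq_or_lt_of_le hu0.2 with hN0 | hN0
      · -- u 0 = N : the derivative is negative near 0
        have hF0 : μ * u 0 + σ * u ((0:ℝ) - a - c * u 0) < 0 := by
          have h1 : (0:ℝ) - a - c * u 0 = -τ := by rw [hN0, hτ]; ring
          rw [h1, huφ (-τ) (by linarith)]
          have h2 := (hφ (-τ) ⟨le_rfl, by linarith⟩).2
          nlinarith [hN0]
        have e1 : ∀ᶠ s in nhds (0:ℝ), μ * u s + σ * u (s - a - c * u s) < 0 :=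
          (hFcont.tendsto 0).eventually_lt_const hF0
        have e2 : ∀ᶠ s in nhds (0:ℝ), M < u s :=
          (hucont.tendsto 0).eventually_const_lt (by rw [hN0]; exact hMN)
        obtain ⟨ε, hε, hball⟩ := Metric.eventually_nhds_iff.mp (e1.and e2)
        have hdist : ∀ s : ℝ, 0 < s → s ≤ ε / 2 → dist s (0:ℝ) < ε := by
          intro s hs hsε
          rw [Real.dist_eq, sub_zero, abs_of_pos hs]; linarith
        have hSA : StrictAntiOn u (Set.Icc (0:ℝ) (ε/2)) := by
          apply strictAntiOn_of_deriv_neg (convex_Icc _ _) hucont.continuousOn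
          intro x hx
          rw [interior_Icc] at hx
          rw [(huode x hx.1).deriv]
          exact (hball (hdist x hx.1 hx.2.le)).1
        refine ⟨ε/2, by positivity, fun s hs hsε => ?_⟩
        refine ⟨(hball (hdist s hs hsε)).2, ?_⟩
        have := hSA ⟨le_rfl, by positivity⟩ ⟨hs.le, hsε⟩ hs
        rwa [hN0] at this
      rcases eq_or_lt_of_le hu0.1 with hM0' | hM0'
      · -- u 0 = M : the derivative is positive near 0
        have hF0 : 0 < μ * u 0 + σ * u ((0:ℝ) - a - c * u 0) := by
          have h1 : (0:ℝ) - a - c * u 0 ≤ 0 := by rw [← hM0']; linarith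
          have h2 : -τ ≤ (0:ℝ) - a - c * u 0 := by rw [← hM0', hτ]; nlinarith
          rw [huφ _ h1]
          have h3 := (hφ _ ⟨h2, h1⟩).1
          nlinarith [hM0']
        have e1 : ∀ᶠ s in nhds (0:ℝ), 0 < μ * u s + σ * u (s - a - c * u s) :=
          (hFcont.tendsto 0).eventually_const_lt hF0
        have e2 : ∀ᶠ s in nhds (0:ℝ), u s < N :=
          (hucont.tendsto 0).eventually_lt_const (by rw [← hM0']; exact hMN)
        obtain ⟨ε, hε, hball⟩ := Metric.eventually_nhds_iff.mp (e1.and e2)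
        have hdist : ∀ s : ℝ, 0 < s → s ≤ ε / 2 → dist s (0:ℝ) < ε := by
          intro s hs hsε
          rw [Real.dist_eq, sub_zero, abs_of_pos hs]; linarith
        have hSM : StrictMonoOn u (Set.Icc (0:ℝ) (ε/2)) := by
          apply strictMonoOn_of_deriv_pos (convex_Icc _ _) hucont.continuousOn
          intro x hx
          rw [interior_Icc] at hx
          rw [(huode x hx.1).deriv]
          exact (hball (hdist x hx.1 hx.2.le)).1
        refine ⟨ε/2, by positivity, fun s hs hsε => ?_⟩
        refine ⟨?_, (hball (hdist s hs hsε)).2⟩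
        have := hSM ⟨le_rfl, by positivity⟩ ⟨hs.le, hsε⟩ hs
        rwa [← hM0'] at this
      · -- M < u 0 < N : continuity
        have e : ∀ᶠ s in nhds (0:ℝ), M < u s ∧ u s < N :=
          ((hucont.tendsto 0).eventually_const_lt hM0').and
            ((hucont.tendsto 0).eventually_lt_const hN0)
        obtain ⟨ε, hε, hball⟩ := Metric.eventually_nhds_iff.mp e
        refine ⟨ε/2, by positivity, fun s hs hsε => ?_⟩
        have : dist s (0:ℝ) < ε := by
          rw [Real.dist_eq, sub_zero, abs_of_pos hs]; linarith
        exact ⟨(hball this).1, (hball this).2⟩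
    obtain ⟨δ, hδ, hδprop⟩ := hgoal
    obtain ⟨b, hbB, hbδ⟩ := exists_lt_of_csInf_lt hBne (show sInf B < δ by rw [← ht₀def, ← h0]; exact hδ)
    exact hbB.2 (hδprop b hbB.1 hbδ.le)
  · -- t₀ > 0 : u ∈ Icc M N on [0, t₀], apply key
    have hIcc : ∀ s ∈ Set.Icc (0:ℝ) t₀, u s ∈ Set.Icc M N := by
      intro s hs
      rcases eq_or_lt_of_le hs.1 with h | h
      · rw [← h]; exact hu0
      rcases eq_or_lt_of_le hs.2 with h' | h'
      · -- s = t₀ : limit from the left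
        rw [h']
        have h1 : Filter.Tendsto u (nhdsWithin t₀ (Set.Iio t₀)) (nhds (u t₀)) :=
          (hucont.continuousAt (x := t₀)).continuousWithinAt
        have h2 : ∀ᶠ x in nhdsWithin t₀ (Set.Iio t₀), u x ∈ Set.Icc M N := by
          have hev1 : ∀ᶠ x in nhdsWithin t₀ (Set.Iio t₀), 0 < x :=
            eventually_nhdsWithin_of_eventually_nhds (eventually_gt_nhds h0)
          have hev2 : ∀ᶠ x in nhdsWithin t₀ (Set.Iio t₀), x < t₀ := eventually_mem_nhdsWithin
          filter_upwards [hev1, hev2] with x hx1 hx2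
          exact Set.Ioo_subset_Icc_self (hpre x hx1 hx2)
        exact isClosed_Icc.mem_of_tendsto h1 h2
      · exact Set.Ioo_subset_Icc_self (hpre s h h')
    exact ht₀mem (key t₀ h0 hIcc)
end

section
/- (Global asymptotic stability in the cone, positive feedback case.) Let a > 0, c > 0, σ > 0 and μ < −σ (so |σ| < −μ). Let N > 0, τ = a + c·N, and suppose φ is continuous with φ(t) ∈ [M₀, N] for all t ∈ [−τ, 0]. Then every solution u of the SDDE satisfies u(t) ∈ (M₀, N) for all t > 0, and u(t) → 0 as t → ∞. -/
open Real Set Filter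

private lemma ev_right_lt {u : ℝ → ℝ} {d T : ℝ} (h : HasDerivAt u d T) (hd : d < 0) :
    ∀ᶠ t in nhdsWithin T (Set.Ioi T), u t < u T := by
  have hs := hasDerivAt_iff_tendsto_slope.mp h
  have h2 : ∀ᶠ t in nhdsWithin T {T}ᶜ, slope u T t < 0 := hs.eventually_lt_const hd
  have h3 : ∀ᶠ t in nhdsWithin T (Set.Ioi T), slope u T t < 0 :=
    h2.filter_mono (nhdsWithin_mono T (fun x hx => ne_of_gt hx))
  filter_upwards [h3, self_mem_nhdsWithin] with t h4 h5
  rw [slope_def_field] at h4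
  have h6 : 0 < t - T := sub_pos.mpr h5
  have h7 := mul_neg_of_neg_of_pos h4 h6
  rw [div_mul_cancel₀ _ (ne_of_gt h6)] at h7
  linarith

private lemma ev_right_gt {u : ℝ → ℝ} {d T : ℝ} (h : HasDerivAt u d T) (hd : 0 < d) :
    ∀ᶠ t in nhdsWithin T (Set.Ioi T), u T < u t := by
  have hs := hasDerivAt_iff_tendsto_slope.mp h
  have h2 : ∀ᶠ t in nhdsWithin T {T}ᶜ, 0 < slope u T t := hs.eventually_const_lt hd
  have h3 : ∀ᶠ t in nhdsWithin T (Set.Ioi T), 0 < slope u T t :=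
    h2.filter_mono (nhdsWithin_mono T (fun x hx => ne_of_gt hx))
  filter_upwards [h3, self_mem_nhdsWithin] with t h4 h5
  rw [slope_def_field] at h4
  have h6 : 0 < t - T := sub_pos.mpr h5
  have h7 := mul_pos h4 h6
  rw [div_mul_cancel₀ _ (ne_of_gt h6)] at h7
  linarith

private lemma ev_left_gt {u : ℝ → ℝ} {d T : ℝ} (h : HasDerivAt u d T) (hd : d < 0) :
    ∀ᶠ t in nhdsWithin T (Set.Iio T), u T < u t := by
  have hs := hasDerivAt_iff_tendsto_slope.mp h
  have h2 : ∀ᶠ t in nhdsWithin T {T}ᶜ, slope u T t < 0 := hs.eventually_lt_const hd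
  have h3 : ∀ᶠ t in nhdsWithin T (Set.Iio T), slope u T t < 0 :=
    h2.filter_mono (nhdsWithin_mono T (fun x hx => ne_of_lt hx))
  filter_upwards [h3, self_mem_nhdsWithin] with t h4 h5
  rw [slope_def_field] at h4
  have h6 : t - T < 0 := sub_neg.mpr h5
  have h7 := mul_pos_of_neg_of_neg h4 h6
  rw [div_mul_cancel₀ _ (ne_of_lt h6)] at h7
  linarith

private lemma ev_left_lt {u : ℝ → ℝ} {d T : ℝ} (h : HasDerivAt u d T) (hd : 0 < d) :
    ∀ᶠ t in nhdsWithin T (Set.Iio T), u t < u T := by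
  have hs := hasDerivAt_iff_tendsto_slope.mp h
  have h2 : ∀ᶠ t in nhdsWithin T {T}ᶜ, 0 < slope u T t := hs.eventually_const_lt hd
  have h3 : ∀ᶠ t in nhdsWithin T (Set.Iio T), 0 < slope u T t :=
    h2.filter_mono (nhdsWithin_mono T (fun x hx => ne_of_lt hx))
  filter_upwards [h3, self_mem_nhdsWithin] with t h4 h5
  rw [slope_def_field] at h4
  have h6 : t - T < 0 := sub_neg.mpr h5
  have h7 := mul_neg_of_pos_of_neg h4 h6
  rw [div_mul_cancel₀ _ (ne_of_lt h6)] at h7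
  linarith

private lemma comp_decay {f g : ℝ → ℝ} {T C μ : ℝ} (hμ : μ < 0)
    (hcont : Continuous f)
    (hf : ∀ t, T < t → HasDerivAt f (g t) t)
    (hg : ∀ t, T < t → g t ≤ μ * (f t - C)) :
    ∀ t, T ≤ t → f t - C ≤ (f T - C) * Real.exp (μ * (t - T)) := by
  have hw : ∀ x, T < x → HasDerivAt (fun t => (f t - C) * Real.exp (-μ * (t - T)))
      (g x * Real.exp (-μ * (x - T)) + (f x - C) * (Real.exp (-μ * (x - T)) * -μ)) x := by
    intro x hx
    have h1 : HasDerivAt (fun t : ℝ => -μ * (t - T)) (-μ) x := by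
      simpa using ((hasDerivAt_id x).sub_const T).const_mul (-μ)
    exact ((hf x hx).sub_const C).mul h1.exp
  have key : AntitoneOn (fun t => (f t - C) * Real.exp (-μ * (t - T))) (Set.Ici T) := by
    apply antitoneOn_of_deriv_nonpos (convex_Ici T)
    · exact ((hcont.sub continuous_const).mul
        (Real.continuous_exp.comp (by continuity))).continuousOn
    · intro x hx
      rw [interior_Ici] at hx
      exact (hw x hx).differentiableAt.differentiableWithinAt
    · intro x hx
      rw [interior_Ici] at hx
      rw [(hw x hx).deriv]
      have hE : 0 < Real.exp (-μ * (x - T)) := Real.exp_pos _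
      nlinarith [mul_le_mul_of_nonneg_right (hg x hx) hE.le]
  intro t ht
  have h1 := key (Set.self_mem_Ici) ht ht
  simp only [sub_self, mul_zero, Real.exp_zero, mul_one] at h1
  have h2 := mul_le_mul_of_nonneg_right h1 (Real.exp_nonneg (μ * (t - T)))
  rw [mul_assoc, ← Real.exp_add, show -μ * (t - T) + μ * (t - T) = 0 by ring,
    Real.exp_zero, mul_one] at h2
  exact h2

set_option maxHeartbeats 2000000 in
/-- Global asymptotic stability in the cone, positive feedback case. -/
theorem sdde_gas_cone_positive
    (a c μ σ N τ : ℝ) (φ u : ℝ → ℝ)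
    (ha : 0 < a) (hc : 0 < c) (hσ : 0 < σ) (hμ : μ < -σ)
    (hN : 0 < N) (hτ : τ = a + c * N)
    (hφcont : Continuous φ)
    (hφ : ∀ t ∈ Set.Icc (-τ) (0:ℝ), φ t ∈ Set.Icc (Mzero a c) N)
    (hu : IsSDDESolution a c μ σ φ u) :
    (∀ t > (0:ℝ), u t ∈ Set.Ioo (Mzero a c) N) ∧
      Filter.Tendsto u Filter.atTop (nhds 0) := by
  obtain ⟨hcont, hhist, _hcd, hode⟩ := hu
  have hμ0 : μ < 0 := by linarith
  have hμσ : μ + σ < 0 := by linarith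
  have hτpos : 0 < τ := by rw [hτ]; nlinarith
  have hM : Mzero a c < 0 := by
    unfold Mzero
    apply div_neg_of_neg_of_pos <;> linarith
  have hacM : a + c * Mzero a c = 0 := by
    unfold Mzero; field_simp; ring
  have hrange : ∀ s : ℝ, -τ ≤ s → s ≤ 0 → Mzero a c ≤ u s ∧ u s ≤ N := by
    intro s h1 h2
    rw [hhist s h2]
    exact ⟨(hφ s ⟨h1, h2⟩).1, (hφ s ⟨h1, h2⟩).2⟩
  have hu0 : Mzero a c ≤ u 0 ∧ u 0 ≤ N := hrange 0 (by linarith) le_rfl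
  set g : ℝ → ℝ := fun t => μ * u t + σ * u (t - a - c * u t) with hg_def
  have hgc : Continuous g := by
    apply (continuous_const.mul hcont).add
    exact continuous_const.mul (hcont.comp (by continuity))
  have hode' : ∀ t : ℝ, 0 < t → HasDerivAt u (g t) t := fun t ht => hode t ht
  -- upper bound
  have upper : ∀ t : ℝ, 0 ≤ t → u t ≤ N := by
    by_contra hcon
    push_neg at hcon
    obtain ⟨t₀, ht₀, ht₀N⟩ := hcon
    have ht₀pos : 0 < t₀ := by
      rcases ht₀.lt_or_eq with h | h
      · exact h
      · exfalso; rw [← h] at ht₀N; linarith [hu0.2]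
    set A : Set ℝ := {t | 0 < t ∧ N < u t} with hA_def
    have hAne : A.Nonempty := ⟨t₀, ht₀pos, ht₀N⟩
    have hAbdd : BddBelow A := ⟨0, fun x hx => hx.1.le⟩
    set T := sInf A with hT_def
    have hTlb : ∀ x ∈ A, T ≤ x := fun x hx => csInf_le hAbdd hx
    have hT0 : 0 ≤ T := le_csInf hAne (fun x hx => hx.1.le)
    have hnear : ∀ b, T < b → ∃ x ∈ A, x < b := fun b hb => exists_lt_of_csInf_lt hAne hb
    have hpast : ∀ s, 0 < s → s < T → u s ≤ N := by
      intro s hs1 hs2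
      by_contra h
      push_neg at h
      exact absurd (hTlb s ⟨hs1, h⟩) (not_le.mpr hs2)
    have huT : u T = N := by
      have h1 : u T ≤ N := by
        by_contra h
        push_neg at h
        have hTpos : 0 < T := by
          rcases hT0.lt_or_eq with h2 | h2
          · exact h2
          · exfalso; rw [← h2] at h; linarith [hu0.2]
        obtain ⟨ε, hε, hball⟩ := Metric.isOpen_iff.mp (isOpen_lt continuous_const hcont) T h
        set s := max (T - ε / 2) (T / 2) with hs_def
        have hsT : s < T := max_lt (by linarith) (by linarith)
        have hspos : 0 < s := lt_of_lt_of_le (by linarith) (le_max_right _ _)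
        have hsball : s ∈ Metric.ball T ε := by
          rw [Metric.mem_ball, Real.dist_eq, abs_lt]
          constructor
          · have := le_max_left (T - ε / 2) (T / 2); linarith
          · linarith
        exact absurd (hpast s hspos hsT) (not_le.mpr (hball hsball))
      have h2 : N ≤ u T := by
        by_contra h
        push_neg at h
        obtain ⟨ε, hε, hball⟩ := Metric.isOpen_iff.mp (isOpen_lt hcont continuous_const) T h
        obtain ⟨x, hxA, hxb⟩ := hnear (T + ε) (by linarith)
        have hxball : x ∈ Metric.ball T ε := by
          rw [Metric.mem_ball, Real.dist_eq, abs_lt]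
          constructor
          · linarith [hTlb x hxA]
          · linarith
        exact absurd hxA.2 (not_lt.mpr (le_of_lt (hball hxball)))
      linarith
    rcases hT0.lt_or_eq with hTpos | hTzero
    · have hD := hode' T hTpos
      have harg : T - a - c * u T = T - τ := by rw [huT, hτ]; ring
      have hdel : u (T - τ) ≤ N := by
        rcases le_or_gt (T - τ) 0 with h | h
        · exact (hrange _ (by linarith) h).2
        · exact hpast _ h (by linarith)
      have hdneg : g T < 0 := by
        have he : g T = μ * N + σ * u (T - τ) := by
          simp only [hg_def]; rw [harg, huT]
        rw [he]; nlinarith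
      have hev := ev_right_lt hD hdneg
      obtain ⟨b, hb, hsub⟩ := mem_nhdsGT_iff_exists_Ioo_subset.mp hev
      obtain ⟨x, hxA, hxb⟩ := hnear b hb
      have hxT : T < x := lt_of_le_of_ne (hTlb x hxA)
        (by intro h; rw [h] at huT; linarith [hxA.2])
      have hlt := hsub ⟨hxT, hxb⟩
      rw [huT] at hlt
      exact absurd hxA.2 (not_lt.mpr hlt.le)
    · have huT0 : u 0 = N := by rw [hTzero]; exact huT
      have hg0 : g 0 < 0 := by
        have harg : (0:ℝ) - a - c * u 0 = -τ := by rw [huT0, hτ]; ring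
        have he : g 0 = μ * N + σ * u (-τ) := by
          simp only [hg_def]; rw [harg, huT0]
        have hdel : u (-τ) ≤ N := (hrange (-τ) le_rfl (by linarith)).2
        rw [he]; nlinarith
      obtain ⟨ε, hε, hball⟩ := Metric.isOpen_iff.mp (isOpen_lt hgc continuous_const) 0 hg0
      have hanti : StrictAntiOn u (Set.Icc 0 (ε/2)) := by
        apply strictAntiOn_of_deriv_neg (convex_Icc 0 (ε/2)) hcont.continuousOn
        intro x hx
        rw [interior_Icc] at hx
        rw [(hode' x hx.1).deriv]
        apply hball
        rw [Metric.mem_ball, Real.dist_eq, sub_zero, abs_of_pos hx.1]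
        linarith [hx.2]
      obtain ⟨x, hxA, hxb⟩ := hnear (ε/2) (by rw [← hTzero]; linarith)
      have hlt : u x < u 0 := hanti (Set.left_mem_Icc.mpr (by linarith))
        ⟨hxA.1.le, hxb.le⟩ hxA.1
      rw [huT0] at hlt
      exact absurd hxA.2 (not_lt.mpr hlt.le)
  -- lower bound
  have lower : ∀ t : ℝ, 0 ≤ t → Mzero a c ≤ u t := by
    by_contra hcon
    push_neg at hcon
    obtain ⟨t₀, ht₀, ht₀M⟩ := hcon
    have ht₀pos : 0 < t₀ := by
      rcases ht₀.lt_or_eq with h | h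
      · exact h
      · exfalso; rw [← h] at ht₀M; linarith [hu0.1]
    set A : Set ℝ := {t | 0 < t ∧ u t < Mzero a c} with hA_def
    have hAne : A.Nonempty := ⟨t₀, ht₀pos, ht₀M⟩
    have hAbdd : BddBelow A := ⟨0, fun x hx => hx.1.le⟩
    set T := sInf A with hT_def
    have hTlb : ∀ x ∈ A, T ≤ x := fun x hx => csInf_le hAbdd hx
    have hT0 : 0 ≤ T := le_csInf hAne (fun x hx => hx.1.le)
    have hnear : ∀ b, T < b → ∃ x ∈ A, x < b := fun b hb => exists_lt_of_csInf_lt hAne hb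
    have hpast : ∀ s, 0 < s → s < T → Mzero a c ≤ u s := by
      intro s hs1 hs2
      by_contra h
      push_neg at h
      exact absurd (hTlb s ⟨hs1, h⟩) (not_le.mpr hs2)
    have huT : u T = Mzero a c := by
      have h1 : Mzero a c ≤ u T := by
        by_contra h
        push_neg at h
        have hTpos : 0 < T := by
          rcases hT0.lt_or_eq with h2 | h2
          · exact h2
          · exfalso; rw [← h2] at h; linarith [hu0.1]
        obtain ⟨ε, hε, hball⟩ := Metric.isOpen_iff.mp (isOpen_lt hcont continuous_const) T h
        set s := max (T - ε / 2) (T / 2) with hs_def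
        have hsT : s < T := max_lt (by linarith) (by linarith)
        have hspos : 0 < s := lt_of_lt_of_le (by linarith) (le_max_right _ _)
        have hsball : s ∈ Metric.ball T ε := by
          rw [Metric.mem_ball, Real.dist_eq, abs_lt]
          constructor
          · have := le_max_left (T - ε / 2) (T / 2); linarith
          · linarith
        exact absurd (hpast s hspos hsT) (not_le.mpr (hball hsball))
      have h2 : u T ≤ Mzero a c := by
        by_contra h
        push_neg at h
        obtain ⟨ε, hε, hball⟩ := Metric.isOpen_iff.mp (isOpen_lt continuous_const hcont) T h
        obtain ⟨x, hxA, hxb⟩ := hnear (T + ε) (by linarith)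
        have hxball : x ∈ Metric.ball T ε := by
          rw [Metric.mem_ball, Real.dist_eq, abs_lt]
          constructor
          · linarith [hTlb x hxA]
          · linarith
        exact absurd hxA.2 (not_lt.mpr (le_of_lt (hball hxball)))
      linarith
    rcases hT0.lt_or_eq with hTpos | hTzero
    · have hD := hode' T hTpos
      have harg : T - a - c * u T = T := by rw [huT]; linarith
      have hdpos : 0 < g T := by
        have he : g T = μ * Mzero a c + σ * Mzero a c := by
          simp only [hg_def]; rw [harg, huT]
        rw [he]; nlinarith
      have hev := ev_right_gt hD hdpos
      obtain ⟨b, hb, hsub⟩ := mem_nhdsGT_iff_exists_Ioo_subset.mp hev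
      obtain ⟨x, hxA, hxb⟩ := hnear b hb
      have hxT : T < x := lt_of_le_of_ne (hTlb x hxA)
        (by intro h; rw [h] at huT; linarith [hxA.2])
      have hlt := hsub ⟨hxT, hxb⟩
      rw [huT] at hlt
      exact absurd hxA.2 (not_lt.mpr hlt.le)
    · have huT0 : u 0 = Mzero a c := by rw [hTzero]; exact huT
      have hg0 : 0 < g 0 := by
        have harg : (0:ℝ) - a - c * u 0 = 0 := by rw [huT0]; linarith
        have he : g 0 = μ * Mzero a c + σ * Mzero a c := by
          simp only [hg_def]; rw [harg, huT0]
        rw [he]; nlinarith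
      obtain ⟨ε, hε, hball⟩ := Metric.isOpen_iff.mp (isOpen_lt continuous_const hgc) 0 hg0
      have hmono : StrictMonoOn u (Set.Icc 0 (ε/2)) := by
        apply strictMonoOn_of_deriv_pos (convex_Icc 0 (ε/2)) hcont.continuousOn
        intro x hx
        rw [interior_Icc] at hx
        rw [(hode' x hx.1).deriv]
        apply hball
        rw [Metric.mem_ball, Real.dist_eq, sub_zero, abs_of_pos hx.1]
        linarith [hx.2]
      obtain ⟨x, hxA, hxb⟩ := hnear (ε/2) (by rw [← hTzero]; linarith)
      have hlt : u 0 < u x := hmono (Set.left_mem_Icc.mpr (by linarith))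
        ⟨hxA.1.le, hxb.le⟩ hxA.1
      rw [huT0] at hlt
      exact absurd hxA.2 (not_lt.mpr hlt.le)
  -- strict bounds
  have upper_strict : ∀ t : ℝ, 0 < t → u t < N := by
    intro t ht
    rcases lt_or_eq_of_le (upper t ht.le) with h | h
    · exact h
    · exfalso
      have hD := hode' t ht
      have harg : t - a - c * u t = t - τ := by rw [h, hτ]; ring
      have hdel : u (t - τ) ≤ N := by
        rcases le_or_gt (t - τ) 0 with h2 | h2
        · exact (hrange _ (by linarith) h2).2
        · exact upper _ h2.le
      have hdneg : g t < 0 := by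
        have he : g t = μ * N + σ * u (t - τ) := by
          simp only [hg_def]; rw [harg, h]
        rw [he]; nlinarith
      have hev := ev_left_gt hD hdneg
      have hev2 : ∀ᶠ x in nhdsWithin t (Set.Iio t), 0 < x :=
        mem_nhdsWithin_of_mem_nhds (Ioi_mem_nhds ht)
      obtain ⟨x, hx1, hx2⟩ := (hev.and hev2).exists
      rw [h] at hx1
      linarith [upper x hx2.le]
  have lower_strict : ∀ t : ℝ, 0 < t → Mzero a c < u t := by
    intro t ht
    rcases lt_or_eq_of_le (lower t ht.le) with h | h
    · exact h
    · exfalso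
      have hD := hode' t ht
      have harg : t - a - c * u t = t := by rw [← h]; linarith
      have hdpos : 0 < g t := by
        have he : g t = μ * Mzero a c + σ * Mzero a c := by
          simp only [hg_def]; rw [harg, ← h]
        rw [he]; nlinarith
      have hev := ev_left_lt hD hdpos
      have hev2 : ∀ᶠ x in nhdsWithin t (Set.Iio t), 0 < x :=
        mem_nhdsWithin_of_mem_nhds (Ioi_mem_nhds ht)
      obtain ⟨x, hx1, hx2⟩ := (hev.and hev2).exists
      rw [← h] at hx1
      linarith [lower x hx2.le]
  refine ⟨fun t ht => ⟨lower_strict t ht, upper_strict t ht⟩, ?_⟩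
  -- convergence to 0
  set R : ℝ := max N (-(Mzero a c)) with hR_def
  have hRpos : 0 < R := lt_of_lt_of_le hN (le_max_left _ _)
  have habs : ∀ t : ℝ, 0 ≤ t → |u t| ≤ R := by
    intro t ht
    rw [abs_le]
    constructor
    · have h1 := lower t ht
      have h2 : -(Mzero a c) ≤ R := le_max_right _ _
      linarith
    · exact le_trans (upper t ht) (le_max_left _ _)
  set k : ℝ := σ / (-μ) with hk_def
  have hk0 : 0 < k := div_pos hσ (by linarith)
  have hk1 : k < 1 := (div_lt_one (by linarith)).mpr (by linarith)
  set k' : ℝ := (1 + k) / 2 with hk'_def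
  have hkk' : k < k' := by rw [hk'_def]; linarith
  have hk'1 : k' < 1 := by rw [hk'_def]; linarith
  have hk'0 : 0 < k' := by rw [hk'_def]; linarith
  have hμC : ∀ r : ℝ, μ * (k * r) = -(σ * r) := by
    intro r
    have hμne : μ ≠ 0 := ne_of_lt hμ0
    rw [hk_def]
    calc μ * (σ / -μ * r) = σ * r * μ / -μ := by ring
      _ = -(σ * r * μ / μ) := by rw [div_neg]
      _ = -(σ * r) := by rw [mul_div_cancel_right₀ _ hμne]
  have step : ∀ T r : ℝ, 0 ≤ T → 0 < r → (∀ s, T ≤ s → |u s| ≤ r) →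
      ∃ T', 0 ≤ T' ∧ ∀ t, T' ≤ t → |u t| ≤ k' * r := by
    intro T r hT hr hb
    have hτT : 0 < T + τ := by linarith
    have hdel_bound : ∀ t, T + τ < t → T ≤ t - a - c * u t := by
      intro t ht
      have htpos : 0 < t := by linarith
      have h2 := upper t htpos.le
      have h3 : c * u t ≤ c * N := mul_le_mul_of_nonneg_left h2 hc.le
      linarith
    set C : ℝ := k * r with hC_def
    have hC0 : 0 < C := mul_pos hk0 hr
    have hgU : ∀ t, T + τ < t → g t ≤ μ * (u t - C) := by
      intro t ht
      have hd1 := hdel_bound t ht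
      have h5 := hb _ hd1
      have h6 : σ * u (t - a - c * u t) ≤ σ * r := by
        have := (abs_le.mp h5).2
        nlinarith
      have h7 := hμC r
      simp only [hg_def]
      rw [hC_def]
      nlinarith [h6, h7]
    have hgL : ∀ t, T + τ < t → -(g t) ≤ μ * (-(u t) - C) := by
      intro t ht
      have hd1 := hdel_bound t ht
      have h5 := hb _ hd1
      have h6 : -(σ * u (t - a - c * u t)) ≤ σ * r := by
        have := (abs_le.mp h5).1
        nlinarith
      have h7 := hμC r
      simp only [hg_def]
      rw [hC_def]
      nlinarith [h6, h7]
    have hupper := comp_decay (f := u) (g := g) (T := T + τ) (C := C) hμ0 hcont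
      (fun t ht => hode' t (by linarith)) hgU
    have hlowercmp := comp_decay (f := fun s => -(u s)) (g := fun s => -(g s))
      (T := T + τ) (C := C) hμ0 hcont.neg
      (fun t ht => (hode' t (by linarith)).neg) hgL
    set x : ℝ := (k' - k) * r / R with hx_def
    have hx0 : 0 < x := div_pos (mul_pos (by linarith) hr) hRpos
    have hexp : Real.exp (μ * (Real.log x / μ)) = x := by
      rw [show μ * (Real.log x / μ) = Real.log x by rw [mul_comm, div_mul_cancel₀ _ (ne_of_lt hμ0)]]
      exact Real.exp_log hx0
    set s₀ : ℝ := Real.log x / μ with hs₀_def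
    refine ⟨T + τ + max s₀ 0, by linarith [le_max_right s₀ (0:ℝ)], ?_⟩
    intro t ht
    have hms := le_max_right s₀ (0:ℝ)
    have hms2 := le_max_left s₀ (0:ℝ)
    have ht2 : T + τ ≤ t := by linarith
    have hE : Real.exp (μ * (t - (T + τ))) ≤ x := by
      rw [← hexp]
      apply Real.exp_le_exp.mpr
      have h8 : s₀ ≤ t - (T + τ) := by linarith
      nlinarith
    have hu1 := hupper t ht2
    have hl1 := hlowercmp t ht2
    have hcoefU : u (T + τ) - C ≤ R := by
      linarith [(abs_le.mp (habs (T + τ) hτT.le)).2]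
    have hcoefL : -(u (T + τ)) - C ≤ R := by
      linarith [(abs_le.mp (habs (T + τ) hτT.le)).1]
    have hE0 : (0:ℝ) < Real.exp (μ * (t - (T + τ))) := Real.exp_pos _
    have hRx : R * x = (k' - k) * r := by
      rw [hx_def, mul_comm, div_mul_cancel₀ _ (ne_of_gt hRpos)]
    have h9 : u t - C ≤ (k' - k) * r := by
      calc u t - C ≤ (u (T + τ) - C) * Real.exp (μ * (t - (T + τ))) := hu1
        _ ≤ R * Real.exp (μ * (t - (T + τ))) := mul_le_mul_of_nonneg_right hcoefU hE0.le
        _ ≤ R * x := mul_le_mul_of_nonneg_left hE hRpos.le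
        _ = (k' - k) * r := hRx
    have h10 : -(u t) - C ≤ (k' - k) * r := by
      calc -(u t) - C ≤ (-(u (T + τ)) - C) * Real.exp (μ * (t - (T + τ))) := hl1
        _ ≤ R * Real.exp (μ * (t - (T + τ))) := mul_le_mul_of_nonneg_right hcoefL hE0.le
        _ ≤ R * x := mul_le_mul_of_nonneg_left hE hRpos.le
        _ = (k' - k) * r := hRx
    rw [abs_le]
    constructor
    · rw [hC_def] at h10; nlinarith [h10]
    · rw [hC_def] at h9; nlinarith [h9]
  have bound_n : ∀ n : ℕ, ∃ T, 0 ≤ T ∧ ∀ t, T ≤ t → |u t| ≤ k' ^ n * R := by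
    intro n
    induction n with
    | zero => exact ⟨0, le_rfl, fun t ht => by simpa using habs t ht⟩
    | succ m ih =>
      obtain ⟨T, hT, hb⟩ := ih
      have hr : 0 < k' ^ m * R := mul_pos (pow_pos hk'0 m) hRpos
      obtain ⟨T', hT', hb'⟩ := step T (k' ^ m * R) hT hr hb
      refine ⟨T', hT', fun t ht => ?_⟩
      calc |u t| ≤ k' * (k' ^ m * R) := hb' t ht
        _ = k' ^ (m + 1) * R := by ring
  rw [Metric.tendsto_atTop]
  intro ε hε
  obtain ⟨n, hn⟩ := exists_pow_lt_of_lt_one (div_pos hε hRpos) hk'1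
  obtain ⟨T, hT, hb⟩ := bound_n n
  refine ⟨T, fun t ht => ?_⟩
  rw [Real.dist_eq, sub_zero]
  calc |u t| ≤ k' ^ n * R := hb t ht
    _ < ε := (lt_div_iff₀ hRpos).mp hn
end

section
/- (Solution dichotomy.) Let a > 0, c > 0, μ < 0 and σ < 0. Set N = max{N₀, φ(0)} and τ = a + c·N, and suppose φ is continuous with φ(t) ≥ M₀ for all t ∈ [−τ, 0]. Then every solution u of the SDDE behaves in exactly one of the following two ways: (A) there exists T̄ ≥ 0 such that u is monotone on [T̄, ∞) and u(t) → 0 as t → ∞; or (B) for every T > 0 there exist T₁ > T and T₂ > T such that u attains a local maximum at T₁ with u(T₁) > 0 and a local minimum at T₂ with u(T₂) < 0, and furthermore there exists t ∈ [T, T + τ] such that u(t)·u'(t) < 0. -/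
open Real Set Filter

section aux

variable {a c μ σ N τ : ℝ} {φ u : ℝ → ℝ}

lemma SDDE.g_cont (hu : IsSDDESolution a c μ σ φ u) :
    Continuous (fun t => μ * u t + σ * u (t - a - c * u t)) := by
  have hc := hu.1
  fun_prop

lemma SDDE.lower (ha : 0 < a) (hc : 0 < c) (hμ : μ < 0) (hσ : σ < 0) (hτpos : 0 < τ)
    (hφ : ∀ t ∈ Set.Icc (-τ) (0:ℝ), Mzero a c ≤ φ t) (hu : IsSDDESolution a c μ σ φ u) :
    ∀ t, 0 ≤ t → Mzero a c ≤ u t := by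
  set M := Mzero a c with hM
  have hMneg : M < 0 := by
    rw [hM]; unfold Mzero; exact div_neg_of_neg_of_pos (by linarith) hc
  have hu0 : M ≤ u 0 := by
    rw [hu.2.1 0 le_rfl]; exact hφ 0 ⟨by linarith, le_rfl⟩
  by_contra hcon
  push_neg at hcon
  obtain ⟨t₀, ht₀, ht₀M⟩ := hcon
  set S : Set ℝ := {t | 0 ≤ t ∧ u t < M} with hS
  have hSne : S.Nonempty := ⟨t₀, ht₀, ht₀M⟩
  have hSbdd : BddBelow S := ⟨0, fun x hx => hx.1⟩
  set t₁ := sInf S with ht₁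
  have ht₁0 : 0 ≤ t₁ := le_csInf hSne (fun x hx => hx.1)
  -- u t₁ ≤ M
  have hle : u t₁ ≤ M := by
    by_contra hlt
    push_neg at hlt
    have hev : ∀ᶠ s in nhds t₁, M < u s :=
      (hu.1.continuousAt (x := t₁)).eventually (eventually_gt_nhds hlt)
    obtain ⟨ε, hε, hball⟩ := Metric.eventually_nhds_iff.mp hev
    obtain ⟨s, hsS, hs⟩ := exists_lt_of_csInf_lt hSne (show sInf S < t₁ + ε by linarith)
    have : t₁ ≤ s := csInf_le hSbdd hsS
    have : M < u s := hball (by rw [Real.dist_eq]; rw [abs_lt]; constructor <;> linarith)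
    exact absurd hsS.2 (by linarith)
  -- M ≤ u t₁
  have hge : M ≤ u t₁ := by
    rcases eq_or_lt_of_le ht₁0 with h0 | h0
    · rw [← h0]; exact hu0
    · by_contra hlt
      push_neg at hlt
      have hev : ∀ᶠ s in nhds t₁, u s < M :=
        (hu.1.continuousAt (x := t₁)).eventually (eventually_lt_nhds hlt)
      obtain ⟨ε, hε, hball⟩ := Metric.eventually_nhds_iff.mp hev
      set s := max (t₁ - ε / 2) 0 with hs
      have hs0 : 0 ≤ s := le_max_right _ _
      have hslt : s < t₁ := by
        rcases max_cases (t₁ - ε / 2) 0 with ⟨h1, h2⟩ | ⟨h1, h2⟩ <;> rw [hs, h1] <;> linarith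
      have hsd : dist s t₁ < ε := by
        rw [Real.dist_eq, abs_lt]
        rcases max_cases (t₁ - ε / 2) 0 with ⟨h1, h2⟩ | ⟨h1, h2⟩ <;> rw [hs, h1] <;>
          constructor <;> linarith
      have : s ∈ S := ⟨hs0, hball hsd⟩
      exact absurd (csInf_le hSbdd this) (by linarith)
  have huM : u t₁ = M := le_antisymm hle hge
  -- the vector field is positive at t₁
  set g : ℝ → ℝ := fun t => μ * u t + σ * u (t - a - c * u t) with hg
  have hkey : t₁ - a - c * u t₁ = t₁ := by
    rw [huM, hM]; unfold Mzero; field_simp; ring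
  have hgpos : 0 < g t₁ := by
    rw [hg]; simp only []
    rw [hkey, huM]
    nlinarith
  have hev : ∀ᶠ s in nhds t₁, 0 < g s :=
    ((SDDE.g_cont hu).continuousAt (x := t₁)).eventually (eventually_gt_nhds hgpos)
  obtain ⟨ε, hε, hball⟩ := Metric.eventually_nhds_iff.mp hev
  -- u is strictly monotone on [t₁, t₁ + ε/2]
  have hmono : StrictMonoOn u (Set.Icc t₁ (t₁ + ε / 2)) := by
    apply strictMonoOn_of_deriv_pos (convex_Icc _ _) hu.1.continuousOn
    intro x hx
    rw [interior_Icc] at hx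
    have hx0 : 0 < x := lt_of_le_of_lt ht₁0 hx.1
    have hd := hu.2.2.2 x hx0
    rw [hd.deriv]
    exact hball (by rw [Real.dist_eq, abs_lt]; constructor <;> [linarith [hx.1]; linarith [hx.2]])
  obtain ⟨s, hsS, hs⟩ := exists_lt_of_csInf_lt hSne (show sInf S < t₁ + ε / 2 by linarith)
  have hst₁ : t₁ ≤ s := csInf_le hSbdd hsS
  have hsne : t₁ ≠ s := by
    intro h
    have h2 := hsS.2
    rw [← h, huM] at h2
    exact lt_irrefl M h2
  have : u t₁ < u s :=
    hmono ⟨le_rfl, by linarith⟩ ⟨hst₁, hs.le⟩ (lt_of_le_of_ne hst₁ hsne)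
  rw [huM] at this
  exact absurd hsS.2 (by linarith)

lemma SDDE.upper (ha : 0 < a) (hcpos : 0 < c) (hμ : μ < 0) (hσ : σ < 0)
    (hN0 : Nzero a c μ σ ≤ N) (hφ0 : φ 0 ≤ N) (hτ : τ = a + c * N) (hτpos : 0 < τ)
    (hφcont : Continuous φ)
    (hφ : ∀ t ∈ Set.Icc (-τ) (0:ℝ), Mzero a c ≤ φ t) (hu : IsSDDESolution a c μ σ φ u) :
    ∀ t, 0 ≤ t → u t ≤ N := by
  have hμN : μ * N ≤ a * σ / c := by
    have h1 : μ * N ≤ μ * (a * σ / (c * μ)) := mul_le_mul_of_nonpos_left hN0 hμ.le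
    have h2 : μ * (a * σ / (c * μ)) = a * σ / c := by
      have hμ0 : μ ≠ 0 := ne_of_lt hμ
      have hc0 : c ≠ 0 := ne_of_gt hcpos
      field_simp
    linarith
  have hlow : ∀ s, -τ ≤ s → Mzero a c ≤ u s := by
    intro s hs
    rcases le_or_gt s 0 with h | h
    · rw [hu.2.1 s h]; exact hφ s ⟨hs, h⟩
    · exact SDDE.lower ha hcpos hμ hσ hτpos hφ hu s h.le
  have hu0N : u 0 ≤ N := by rw [hu.2.1 0 le_rfl]; exact hφ0
  intro t ht
  have key : ∀ δ > (0:ℝ), u t < N + δ := by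
    intro δ hδ
    set β := 1 / (4 * c * (-σ)) with hβ
    have hσ' : 0 < -σ := neg_pos.mpr hσ
    have hβpos : 0 < β := by rw [hβ]; positivity
    obtain ⟨η, hη, hball⟩ := Metric.continuousAt_iff.mp (hφcont.continuousAt (x := -τ)) β hβpos
    set ε := min δ (η / (2 * c)) with hε
    have hεpos : 0 < ε := lt_min hδ (by positivity)
    have hεδ : ε ≤ δ := min_le_left _ _
    have hcεη : c * ε < η := by
      have : ε ≤ η / (2 * c) := min_le_right _ _
      have h2 : c * ε ≤ c * (η / (2 * c)) := by nlinarith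
      have h3 : c * (η / (2 * c)) = η / 2 := by field_simp
      linarith
    have hlow2 : ∀ s, -τ - c * ε ≤ s → Mzero a c - β ≤ u s := by
      intro s hs
      rcases le_or_gt (-τ) s with h | h
      · linarith [hlow s h]
      · have hs0 : s ≤ 0 := by linarith
        rw [hu.2.1 s hs0]
        have hd : dist s (-τ) < η := by
          rw [Real.dist_eq, abs_lt]; constructor <;> linarith
        have hdist := hball hd
        rw [Real.dist_eq, abs_lt] at hdist
        have hφτM : Mzero a c ≤ φ (-τ) := hφ (-τ) ⟨le_rfl, by linarith⟩
        linarith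
    suffices h : ∀ s, 0 ≤ s → u s < N + ε by
      have := h t ht; linarith
    by_contra hcon
    push_neg at hcon
    obtain ⟨s₀, hs₀0, hs₀⟩ := hcon
    set S : Set ℝ := {s | 0 ≤ s} ∩ {s | N + ε ≤ u s} with hS
    have hSclosed : IsClosed S :=
      (isClosed_le continuous_const continuous_id).inter (isClosed_le continuous_const hu.1)
    have hSne : S.Nonempty := ⟨s₀, hs₀0, hs₀⟩
    have hSbdd : BddBelow S := ⟨0, fun x hx => hx.1⟩
    set t₂ := sInf S with ht₂
    have ht₂S : t₂ ∈ S := hSclosed.csInf_mem hSne hSbdd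
    have ht₂0 : 0 ≤ t₂ := ht₂S.1
    have hut₂ : N + ε ≤ u t₂ := ht₂S.2
    have ht₂pos : 0 < t₂ := by
      rcases eq_or_lt_of_le ht₂0 with h | h
      · exfalso; rw [← h] at hut₂; linarith
      · exact h
    have hbefore : ∀ s, 0 ≤ s → s < t₂ → u s < N + ε := by
      intro s hs hst
      by_contra h
      push_neg at h
      exact absurd (csInf_le hSbdd ⟨hs, h⟩) (not_le.mpr hst)
    have huT : u t₂ = N + ε := by
      refine le_antisymm ?_ hut₂
      by_contra hlt
      push_neg at hlt
      have hev : ∀ᶠ s in nhds t₂, N + ε < u s :=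
        (hu.1.continuousAt (x := t₂)).eventually (eventually_gt_nhds hlt)
      obtain ⟨ε', hε', hball'⟩ := Metric.eventually_nhds_iff.mp hev
      set s := max (t₂ - ε' / 2) 0 with hs
      have hs0 : 0 ≤ s := le_max_right _ _
      have hslt : s < t₂ := by
        rcases max_cases (t₂ - ε' / 2) 0 with ⟨h1, h2⟩ | ⟨h1, h2⟩ <;> rw [hs, h1] <;> linarith
      have hsd : dist s t₂ < ε' := by
        rw [Real.dist_eq, abs_lt]
        rcases max_cases (t₂ - ε' / 2) 0 with ⟨h1, h2⟩ | ⟨h1, h2⟩ <;> rw [hs, h1] <;>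
          constructor <;> linarith
      exact absurd (hball' hsd) (not_lt.mpr (hbefore s hs0 hslt).le)
    rcases le_or_gt (c * ε) t₂ with hcase | hcase
    · -- first hitting after time c*ε : derivative must be < 0 but is ≥ 0
      have hd := hu.2.2.2 t₂ ht₂pos
      set s₂ := t₂ - a - c * u t₂ with hs₂
      have hs₂τ : -τ ≤ s₂ := by
        rw [hs₂, huT, hτ]; nlinarith
      have hus₂ : Mzero a c ≤ u s₂ := hlow s₂ hs₂τ
      have hgneg : μ * u t₂ + σ * u s₂ < 0 := by
        have h2 : σ * u s₂ ≤ σ * Mzero a c := mul_le_mul_of_nonpos_left hus₂ hσ.le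
        have h3 : σ * Mzero a c = -(a * σ / c) := by
          unfold Mzero; ring
        rw [huT]
        nlinarith
      have hslope : 0 ≤ μ * u t₂ + σ * u s₂ := by
        have htend := hasDerivAt_iff_tendsto_slope.mp hd
        have htend' : Tendsto (slope u t₂) (nhdsWithin t₂ (Set.Iio t₂))
            (nhds (μ * u t₂ + σ * u s₂)) :=
          htend.mono_left (nhdsWithin_mono _ (fun x hx => ne_of_lt hx))
        refine ge_of_tendsto htend' ?_
        filter_upwards [Ioo_mem_nhdsLT_of_mem (⟨ht₂pos, le_rfl⟩ : t₂ ∈ Set.Ioc 0 t₂)] with x hx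
        have hux : u x < N + ε := hbefore x hx.1.le hx.2
        rw [slope_def_field, div_nonneg_iff]
        right
        constructor
        · rw [huT]; linarith
        · linarith [hx.2]
      linarith
    · -- hitting very early : slope too large
      set S₄ : Set ℝ := Set.Icc 0 t₂ ∩ {s | u s ≤ N + ε / 2} with hS₄
      have hS₄closed : IsClosed S₄ := isClosed_Icc.inter (isClosed_le hu.1 continuous_const)
      have hS₄ne : S₄.Nonempty := ⟨0, ⟨le_rfl, ht₂0⟩, by simp; linarith⟩
      have hS₄bdd : BddAbove S₄ := ⟨t₂, fun x hx => hx.1.2⟩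
      set t₄ := sSup S₄ with ht₄
      have ht₄S : t₄ ∈ S₄ := hS₄closed.csSup_mem hS₄ne hS₄bdd
      have ht₄0 : 0 ≤ t₄ := ht₄S.1.1
      have hut₄ : u t₄ ≤ N + ε / 2 := ht₄S.2
      have ht₄lt : t₄ < t₂ := by
        rcases eq_or_lt_of_le ht₄S.1.2 with h | h
        · exfalso; rw [h, huT] at hut₄; linarith
        · exact h
      obtain ⟨t₃, ht₃, hgt₃⟩ := exists_hasDerivAt_eq_slope u
        (fun x => μ * u x + σ * u (x - a - c * u x)) ht₄lt hu.1.continuousOn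
        (fun x hx => hu.2.2.2 x (lt_of_le_of_lt ht₄0 hx.1))
      have ht₃0 : 0 < t₃ := lt_of_le_of_lt ht₄0 ht₃.1
      have hut₃hi : u t₃ < N + ε := hbefore t₃ ht₃0.le ht₃.2
      have hut₃lo : N + ε / 2 < u t₃ := by
        by_contra h
        push_neg at h
        have : t₃ ∈ S₄ := ⟨⟨ht₃0.le, ht₃.2.le⟩, h⟩
        exact absurd (le_csSup hS₄bdd this) (not_le.mpr ht₃.1)
      have hslopebig : 1 / (2 * c) ≤ (u t₂ - u t₄) / (t₂ - t₄) := by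
        have hnum : ε / 2 ≤ u t₂ - u t₄ := by rw [huT]; linarith
        have hden : 0 < t₂ - t₄ := by linarith
        have hden2 : t₂ - t₄ < c * ε := by linarith
        have heq : 1 / (2 * c) = (ε / 2) / (c * ε) := by
          rw [div_eq_div_iff (by positivity) (by positivity)]; ring
        rw [heq, div_le_div_iff₀ (by positivity) hden]
        have hh1 : ε / 2 * (t₂ - t₄) ≤ ε / 2 * (c * ε) :=
          mul_le_mul_of_nonneg_left hden2.le (by positivity)
        have hh2 : ε / 2 * (c * ε) ≤ (u t₂ - u t₄) * (c * ε) :=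
          mul_le_mul_of_nonneg_right hnum (by positivity)
        linarith
      set s₃ := t₃ - a - c * u t₃ with hs₃
      have hs₃lb : -τ - c * ε ≤ s₃ := by
        have hmul : c * u t₃ ≤ c * (N + ε) := mul_le_mul_of_nonneg_left hut₃hi.le hcpos.le
        rw [hs₃, hτ]
        linarith
      have hus₃ : Mzero a c - β ≤ u s₃ := hlow2 s₃ hs₃lb
      have hgsmall : μ * u t₃ + σ * u s₃ ≤ 1 / (4 * c) := by
        have h1 : μ * u t₃ ≤ μ * N := mul_le_mul_of_nonpos_left (by linarith) hμ.le
        have h2 : σ * u s₃ ≤ σ * (Mzero a c - β) := mul_le_mul_of_nonpos_left hus₃ hσ.le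
        have h3 : σ * (Mzero a c - β) = -(a * σ / c) + 1 / (4 * c) := by
          have hσ0 : σ ≠ 0 := ne_of_lt hσ
          have hc0 : c ≠ 0 := ne_of_gt hcpos
          unfold Mzero; rw [hβ]; field_simp; ring
        linarith
      have hcc : 1 / (4 * c) < 1 / (2 * c) :=
        one_div_lt_one_div_of_lt (by linarith) (by linarith)
      have hgt₃' : μ * u t₃ + σ * u s₃ = (u t₂ - u t₄) / (t₂ - t₄) := hgt₃
      rw [hgt₃'] at hgsmall
      linarith
  by_contra h
  push_neg at h
  have := key ((u t - N) / 2) (by linarith)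
  linarith

lemma SDDE.samp (hcpos : 0 < c) (hu : IsSDDESolution a c μ σ φ u)
    (hlow : ∀ s, 0 ≤ s → Mzero a c ≤ u s) (hup : ∀ s, 0 ≤ s → u s ≤ N)
    (hτub : τ = a + c * N) :
    ∀ s, 0 ≤ s → s - τ ≤ s - a - c * u s ∧ s - a - c * u s ≤ s := by
  intro s hs
  constructor
  · have h1 := mul_le_mul_of_nonneg_left (hup s hs) hcpos.le
    rw [hτub]; linarith
  · have h1 := mul_le_mul_of_nonneg_left (hlow s hs) hcpos.le
    have h2 : c * Mzero a c = -a := by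
      have hc0 : c ≠ 0 := ne_of_gt hcpos
      unfold Mzero; field_simp
    linarith

lemma SDDE.propagation (hcpos : 0 < c) (hτpos : 0 < τ)
    (hu : IsSDDESolution a c μ σ φ u)
    (hlow : ∀ s, 0 ≤ s → Mzero a c ≤ u s) (hup : ∀ s, 0 ≤ s → u s ≤ N)
    (hτub : τ = a + c * N)
    (T : ℝ) (hT : 0 < T) (hz : ∀ s ∈ Set.Icc T (T + τ), u s = 0) :
    ∀ t, T ≤ t → u t = 0 := by
  have hsamp := SDDE.samp hcpos hu hlow hup hτub
  set K := |μ| + |σ| + 1 with hK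
  have hKpos : 0 < K := by positivity
  set h := 1 / (2 * K) with hh
  have hhpos : 0 < h := by positivity
  have hKh : K * h = 1 / 2 := by
    rw [hh]
    have : K ≠ 0 := ne_of_gt hKpos
    field_simp
  have main : ∀ n : ℕ, ∀ s ∈ Set.Icc T (T + τ + n * h), u s = 0 := by
    intro n
    induction n with
    | zero => simpa using hz
    | succ n ih =>
      intro s hs
      set X := T + τ + n * h with hX
      have hnh : (0:ℝ) ≤ n * h := by positivity
      have hXT : T + τ ≤ X := by rw [hX]; linarith
      have hTX : T ≤ X := by linarith
      have hXpos : 0 < X := by linarith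
      rcases le_or_gt s X with hsX | hsX
      · exact ih s ⟨hs.1, hsX⟩
      · have hs2 : s ≤ X + h := by
          have := hs.2
          push_cast at this
          rw [hX]; push_cast; linarith
        have huX : u X = 0 := ih X ⟨hTX, le_rfl⟩
        obtain ⟨tm, htmmem, htmmax⟩ := isCompact_Icc.exists_isMaxOn
          (Set.nonempty_Icc.mpr (by linarith : X ≤ X + h))
          ((continuous_abs.comp hu.1).continuousOn)
        have hmax : ∀ x ∈ Set.Icc X (X + h), |u x| ≤ |u tm| := fun x hx => htmmax hx
        have hzero : |u tm| ≤ 0 := by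
          rcases eq_or_lt_of_le htmmem.1 with hXtm | hXtm
          · rw [← hXtm, huX]; simp
          · obtain ⟨ξ, hξ, hgξ⟩ := exists_hasDerivAt_eq_slope u
              (fun x => μ * u x + σ * u (x - a - c * u x)) hXtm hu.1.continuousOn
              (fun x hx => hu.2.2.2 x (lt_trans hXpos hx.1))
            have hgξ' : μ * u ξ + σ * u (ξ - a - c * u ξ) = (u tm - u X) / (tm - X) := hgξ
            have hξ0 : 0 ≤ ξ := le_of_lt (lt_trans hXpos hξ.1)
            have hξmem : ξ ∈ Set.Icc X (X + h) := ⟨hξ.1.le, le_trans hξ.2.le htmmem.2⟩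
            have hsξ := hsamp ξ hξ0
            set sξ := ξ - a - c * u ξ with hsξdef
            have husξ : |u sξ| ≤ |u tm| := by
              rcases le_or_gt sξ X with hcase | hcase
              · have : u sξ = 0 := ih sξ ⟨by linarith [hsξ.1, hξmem.1], hcase⟩
                rw [this]; simp
              · exact hmax sξ ⟨hcase.le, le_trans hsξ.2 hξmem.2⟩
            have huξ : |u ξ| ≤ |u tm| := hmax ξ hξmem
            have hutm : u tm = (μ * u ξ + σ * u sξ) * (tm - X) := by
              have hne : tm - X ≠ 0 := ne_of_gt (sub_pos.mpr hXtm)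
              rw [eq_div_iff hne] at hgξ'
              rw [huX] at hgξ'
              linarith
            have habs : |u tm| ≤ K * h * |u tm| := by
              conv_lhs => rw [hutm]
              rw [abs_mul]
              have h1 : |μ * u ξ + σ * u sξ| ≤ (|μ| + |σ|) * |u tm| := by
                calc |μ * u ξ + σ * u sξ| ≤ |μ * u ξ| + |σ * u sξ| := abs_add_le _ _
                _ = |μ| * |u ξ| + |σ| * |u sξ| := by rw [abs_mul, abs_mul]
                _ ≤ |μ| * |u tm| + |σ| * |u tm| := by
                    apply add_le_add
                    · exact mul_le_mul_of_nonneg_left huξ (abs_nonneg _)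
                    · exact mul_le_mul_of_nonneg_left husξ (abs_nonneg _)
                _ = (|μ| + |σ|) * |u tm| := by ring
              have h2 : |tm - X| ≤ h := by
                rw [abs_le]
                constructor
                · linarith [htmmem.1]
                · linarith [htmmem.2]
              calc |μ * u ξ + σ * u sξ| * |tm - X| ≤ ((|μ| + |σ|) * |u tm|) * h :=
                    mul_le_mul h1 h2 (abs_nonneg _) (by positivity)
              _ ≤ (K * |u tm|) * h := by
                    apply mul_le_mul_of_nonneg_right _ hhpos.le
                    apply mul_le_mul_of_nonneg_right _ (abs_nonneg _)
                    rw [hK]; linarith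
              _ = K * h * |u tm| := by ring
            rw [hKh] at habs
            linarith [abs_nonneg (u tm)]
        have : |u s| ≤ 0 := le_trans (hmax s ⟨hsX.le, hs2⟩) hzero
        have := abs_nonneg (u s)
        have : |u s| = 0 := le_antisymm ‹|u s| ≤ 0› this
        exact abs_eq_zero.mp this
  intro t htT
  obtain ⟨n, hn⟩ := exists_nat_ge ((t - T - τ) / h)
  have : t - T - τ ≤ n * h := by
    rw [div_le_iff₀ hhpos] at hn
    linarith
  exact main n t ⟨htT, by linarith⟩

lemma SDDE.window (hμ : μ < 0) (hσ : σ < 0) (hτpos : 0 < τ)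
    (hu : IsSDDESolution a c μ σ φ u) (hcpos : 0 < c)
    (hlow : ∀ s, 0 ≤ s → Mzero a c ≤ u s) (hup : ∀ s, 0 ≤ s → u s ≤ N)
    (hτub : τ = a + c * N)
    (hosc : ∀ T', ∃ t > T', 0 < u t)
    (T : ℝ) (hT : 0 < T) : ∃ t ∈ Set.Icc T (T + τ), u t * deriv u t < 0 := by
  by_contra hcon
  push_neg at hcon
  have hsamp := SDDE.samp hcpos hu hlow hup hτub
  set E := T + τ with hE
  have hTE : T < E := by rw [hE]; linarith
  have hE0 : 0 < E := by linarith
  have hqmono : MonotoneOn (fun t => u t ^ 2) (Set.Icc T E) := by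
    apply monotoneOn_of_deriv_nonneg (convex_Icc _ _) ((hu.1.pow 2).continuousOn)
    · intro x hx
      rw [interior_Icc] at hx
      exact ((hu.2.2.2 x (lt_trans hT hx.1)).pow 2).differentiableAt.differentiableWithinAt
    · intro x hx
      rw [interior_Icc] at hx
      have hx0 : 0 < x := lt_trans hT hx.1
      have hd := hu.2.2.2 x hx0
      rw [(hd.pow 2).deriv]
      have hderiv : deriv u x = μ * u x + σ * u (x - a - c * u x) := hd.deriv
      have hc := hcon x ⟨hx.1.le, hx.2.le⟩
      rw [hderiv] at hc
      norm_num
      nlinarith [hc]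
  have hsE := hsamp E hE0.le
  set sE := E - a - c * u E with hsEdef
  have hsET : T ≤ sE := by linarith [hsE.1]
  have hsEE : sE ≤ E := hsE.2
  have hdE := hu.2.2.2 E hE0
  have hderivE : deriv u E = μ * u E + σ * u sE := hdE.deriv
  have hcE := hcon E ⟨hTE.le, le_rfl⟩
  rw [hderivE] at hcE
  rcases lt_trichotomy (u E) 0 with hEneg | hEzero | hEpos
  · rcases lt_trichotomy (u sE) 0 with h1 | h1 | h1
    · have hg : 0 < μ * u E + σ * u sE := by
        nlinarith [mul_pos_of_neg_of_neg hμ hEneg, mul_pos_of_neg_of_neg hσ h1]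
      nlinarith [mul_neg_of_neg_of_pos hEneg hg]
    · rw [h1, mul_zero, add_zero] at hcE
      have hg : 0 < μ * u E := mul_pos_of_neg_of_neg hμ hEneg
      nlinarith [mul_neg_of_neg_of_pos hEneg hg]
    · obtain ⟨z, hz, huz⟩ := intermediate_value_Ioo' hsEE hu.1.continuousOn
        (show (0:ℝ) ∈ Set.Ioo (u E) (u sE) from ⟨hEneg, h1⟩)
      have hq1 : u sE ^ 2 ≤ u z ^ 2 :=
        hqmono ⟨hsET, hsEE⟩ ⟨by linarith [hz.1], by linarith [hz.2]⟩ hz.1.le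
      rw [huz] at hq1
      nlinarith
  · have hall : ∀ s ∈ Set.Icc T E, u s = 0 := by
      intro s hsmem
      have hq : u s ^ 2 ≤ u E ^ 2 := hqmono hsmem ⟨hTE.le, le_rfl⟩ hsmem.2
      rw [hEzero] at hq
      have hq2 : u s ^ 2 = 0 := le_antisymm (by nlinarith) (sq_nonneg (u s))
      exact (pow_eq_zero_iff two_ne_zero).mp hq2
    have hprop := SDDE.propagation hcpos hτpos hu hlow hup hτub T hT hall
    obtain ⟨t', ht', hut'⟩ := hosc E
    rw [hprop t' (by linarith)] at hut'
    exact lt_irrefl 0 hut'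
  · rcases lt_trichotomy (u sE) 0 with h1 | h1 | h1
    · obtain ⟨z, hz, huz⟩ := intermediate_value_Ioo hsEE hu.1.continuousOn
        (show (0:ℝ) ∈ Set.Ioo (u sE) (u E) from ⟨h1, hEpos⟩)
      have hq1 : u sE ^ 2 ≤ u z ^ 2 :=
        hqmono ⟨hsET, hsEE⟩ ⟨by linarith [hz.1], by linarith [hz.2]⟩ hz.1.le
      rw [huz] at hq1
      nlinarith
    · rw [h1, mul_zero, add_zero] at hcE
      have hg : μ * u E < 0 := mul_neg_of_neg_of_pos hμ hEpos
      nlinarith [mul_neg_of_pos_of_neg hEpos hg]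
    · have hg : μ * u E + σ * u sE < 0 := by
        nlinarith [mul_neg_of_neg_of_pos hμ hEpos, mul_neg_of_neg_of_pos hσ h1]
      nlinarith [mul_neg_of_pos_of_neg hEpos hg]

lemma SDDE.extrema (hu : IsSDDESolution a c μ σ φ u)
    (hpos : ∀ T', ∃ t > T', 0 < u t) (hneg : ∀ T', ∃ t > T', u t < 0) (T : ℝ) :
    (∃ T₁ > T, IsLocalMax u T₁ ∧ 0 < u T₁) ∧ (∃ T₂ > T, IsLocalMin u T₂ ∧ u T₂ < 0) := by
  obtain ⟨p, hpT, hup⟩ := hpos T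
  obtain ⟨q, hqp, huq⟩ := hneg p
  obtain ⟨r, hrq, hur⟩ := hpos q
  obtain ⟨w, hwr, huw⟩ := hneg r
  obtain ⟨z₁, hz₁, huz₁⟩ := intermediate_value_Ioo' hqp.le hu.1.continuousOn
    (show (0:ℝ) ∈ Set.Ioo (u q) (u p) from ⟨huq, hup⟩)
  obtain ⟨z₂, hz₂, huz₂⟩ := intermediate_value_Ioo hrq.le hu.1.continuousOn
    (show (0:ℝ) ∈ Set.Ioo (u q) (u r) from ⟨huq, hur⟩)
  obtain ⟨z₃, hz₃, huz₃⟩ := intermediate_value_Ioo' hwr.le hu.1.continuousOn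
    (show (0:ℝ) ∈ Set.Ioo (u w) (u r) from ⟨huw, hur⟩)
  constructor
  · obtain ⟨m, hm, hmmax⟩ := isCompact_Icc.exists_isMaxOn
      (Set.nonempty_Icc.mpr (by linarith [hz₂.2, hz₃.1] : z₂ ≤ z₃)) hu.1.continuousOn
    have hmr : u r ≤ u m := hmmax ⟨hz₂.2.le, hz₃.1.le⟩
    have hm0 : 0 < u m := lt_of_lt_of_le hur hmr
    have hmz₂ : z₂ < m := by
      rcases eq_or_lt_of_le hm.1 with h | h
      · exfalso; rw [← h, huz₂] at hm0; exact lt_irrefl 0 hm0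
      · exact h
    have hmz₃ : m < z₃ := by
      rcases eq_or_lt_of_le hm.2 with h | h
      · exfalso; rw [h, huz₃] at hm0; exact lt_irrefl 0 hm0
      · exact h
    refine ⟨m, by linarith [hz₂.1], ?_, hm0⟩
    exact Filter.eventually_of_mem (Icc_mem_nhds hmz₂ hmz₃) (fun y hy => hmmax hy)
  · obtain ⟨m, hm, hmmin⟩ := isCompact_Icc.exists_isMinOn
      (Set.nonempty_Icc.mpr (by linarith [hz₁.2, hz₂.1] : z₁ ≤ z₂)) hu.1.continuousOn
    have hmq : u m ≤ u q := hmmin ⟨hz₁.2.le, hz₂.1.le⟩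
    have hm0 : u m < 0 := lt_of_le_of_lt hmq huq
    have hmz₁ : z₁ < m := by
      rcases eq_or_lt_of_le hm.1 with h | h
      · exfalso; rw [← h, huz₁] at hm0; exact lt_irrefl 0 hm0
      · exact h
    have hmz₂ : m < z₂ := by
      rcases eq_or_lt_of_le hm.2 with h | h
      · exfalso; rw [h, huz₂] at hm0; exact lt_irrefl 0 hm0
      · exact h
    refine ⟨m, by linarith [hz₁.1], ?_, hm0⟩
    exact Filter.eventually_of_mem (Icc_mem_nhds hmz₁ hmz₂) (fun y hy => hmmin hy)

lemma SDDE.nonosc_pos (hμ : μ < 0) (hσ : σ < 0) (hτpos : 0 < τ) (hcpos : 0 < c)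
    (hu : IsSDDESolution a c μ σ φ u)
    (hlow : ∀ s, 0 ≤ s → Mzero a c ≤ u s) (hup : ∀ s, 0 ≤ s → u s ≤ N)
    (hτub : τ = a + c * N)
    (T₀ : ℝ) (hsgn : ∀ t, T₀ < t → 0 ≤ u t) :
    ∃ T ≥ (0:ℝ), AntitoneOn u (Set.Ici T) ∧ Filter.Tendsto u Filter.atTop (nhds 0) := by
  have hsamp := SDDE.samp hcpos hu hlow hup hτub
  set T := max T₀ 0 + τ + 1 with hTdef
  have hmax0 : (0:ℝ) ≤ max T₀ 0 := le_max_right _ _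
  have hmaxT₀ : T₀ ≤ max T₀ 0 := le_max_left _ _
  have hT0 : 0 ≤ T := by rw [hTdef]; linarith
  have hgen : ∀ T' : ℝ, T ≤ T' →
      ∀ x ∈ interior (Set.Ici T'), deriv u x = μ * u x + σ * u (x - a - c * u x) ∧
        0 < x ∧ T₀ < x ∧ T₀ < x - a - c * u x ∧ T' - τ ≤ x - a - c * u x := by
    intro T' hT' x hx
    rw [interior_Ici] at hx
    have hx' : T' < x := hx
    have hx0 : 0 < x := by rw [hTdef] at hT'; linarith
    have hsx := hsamp x hx0.le
    refine ⟨(hu.2.2.2 x hx0).deriv, hx0, by rw [hTdef] at hT'; linarith, ?_, by linarith [hsx.1]⟩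
    rw [hTdef] at hT'
    have := hsx.1
    linarith
  have hanti : AntitoneOn u (Set.Ici T) := by
    apply antitoneOn_of_deriv_nonpos (convex_Ici T) hu.1.continuousOn
    · intro x hx
      rw [interior_Ici] at hx
      have hx' : T < x := hx
      have hx0 : 0 < x := by linarith
      exact (hu.2.2.2 x hx0).differentiableAt.differentiableWithinAt
    · intro x hx
      obtain ⟨hdx, hx0, hxT₀, hsxT₀, _⟩ := hgen T le_rfl x hx
      rw [hdx]
      have h1 : 0 ≤ u x := hsgn x hxT₀
      have h2 : 0 ≤ u (x - a - c * u x) := hsgn _ hsxT₀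
      nlinarith
  set L := sInf (u '' Set.Ici T) with hL
  have himgne : (u '' Set.Ici T).Nonempty := ⟨u T, T, Set.self_mem_Ici, rfl⟩
  have hbdd : BddBelow (u '' Set.Ici T) := by
    refine ⟨Mzero a c, ?_⟩
    rintro y ⟨x, hx, rfl⟩
    exact hlow x (le_trans hT0 hx)
  have hLle : ∀ t, T ≤ t → L ≤ u t := fun t ht => csInf_le hbdd ⟨t, ht, rfl⟩
  have htendL : Filter.Tendsto u Filter.atTop (nhds L) := by
    rw [Metric.tendsto_atTop]
    intro ε hε
    obtain ⟨y, ⟨t₀, ht₀, rfl⟩, hy⟩ := exists_lt_of_csInf_lt himgne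
      (show sInf (u '' Set.Ici T) < L + ε by rw [← hL]; linarith)
    refine ⟨t₀, fun t hts => ?_⟩
    have h1 : u t ≤ u t₀ := hanti ht₀ (le_trans ht₀ hts) hts
    have h2 : L ≤ u t := hLle t (le_trans ht₀ hts)
    rw [Real.dist_eq, abs_lt]
    constructor <;> linarith
  have hLge : 0 ≤ L := by
    refine ge_of_tendsto htendL ?_
    refine Filter.eventually_atTop.mpr ⟨T, fun t ht => hsgn t ?_⟩
    rw [hTdef] at ht; linarith
  have hL0 : L = 0 := by
    rcases eq_or_lt_of_le hLge with h | h
    · exact h.symm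
    · exfalso
      set T₁ := T + τ + 1 with hT₁def
      have hTT₁ : T ≤ T₁ := by rw [hT₁def]; linarith
      have hμσL : (μ + σ) * L < 0 := mul_neg_of_neg_of_pos (by linarith) h
      have hanti2 : AntitoneOn (fun t => u t - (μ + σ) * L * t) (Set.Ici T₁) := by
        have hcont2 : Continuous fun t : ℝ => u t - (μ + σ) * L * t := by
          have h := hu.1; fun_prop
        apply antitoneOn_of_deriv_nonpos (convex_Ici T₁) hcont2.continuousOn
        · intro x hx
          rw [interior_Ici] at hx
          have hx' : T₁ < x := hx
          have hx0 : 0 < x := by linarith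
          exact ((hu.2.2.2 x hx0).sub
            ((hasDerivAt_id x).const_mul ((μ + σ) * L))).differentiableAt.differentiableWithinAt
        · intro x hx
          obtain ⟨hdx, hx0, hxT₀, hsxT₀, hsxlb⟩ := hgen T₁ hTT₁ x hx
          rw [interior_Ici] at hx
          have hder : HasDerivAt (fun t => u t - (μ + σ) * L * t)
              ((μ * u x + σ * u (x - a - c * u x)) - (μ + σ) * L * 1) x :=
            (hu.2.2.2 x hx0).sub ((hasDerivAt_id x).const_mul ((μ + σ) * L))
          rw [hder.deriv]
          have hx' : T₁ < x := hx
          have h1 : L ≤ u x := hLle x (by linarith)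
          have h2 : L ≤ u (x - a - c * u x) := hLle _ (by rw [hT₁def] at hsxlb; linarith)
          have h3 : μ * u x ≤ μ * L := mul_le_mul_of_nonpos_left h1 hμ.le
          have h4 : σ * u (x - a - c * u x) ≤ σ * L := mul_le_mul_of_nonpos_left h2 hσ.le
          nlinarith
      set D := (u T₁ + 1) / (-((μ + σ) * L)) with hDdef
      have hD0 : 0 ≤ D := by
        apply div_nonneg _ (by linarith)
        have : L ≤ u T₁ := hLle T₁ hTT₁
        linarith
      have happ := hanti2 (Set.self_mem_Ici) (show T₁ + D ∈ Set.Ici T₁ by simp [hD0])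
        (by linarith : T₁ ≤ T₁ + D)
      have hcomp : (μ + σ) * L * D = -(u T₁ + 1) := by
        have hne' : -((μ + σ) * L) ≠ 0 := ne_of_gt (by linarith)
        rw [hDdef, mul_div_assoc', div_eq_iff hne']; ring
      have hfin : u (T₁ + D) ≤ -1 := by
        simp only [] at happ
        nlinarith [happ]
      have : 0 ≤ u (T₁ + D) := hsgn _ (by rw [hT₁def, hTdef]; linarith)
      linarith
  rw [hL0] at htendL
  exact ⟨T, hT0, hanti, htendL⟩

lemma SDDE.nonosc_neg (hμ : μ < 0) (hσ : σ < 0) (hτpos : 0 < τ) (hcpos : 0 < c)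
    (hu : IsSDDESolution a c μ σ φ u)
    (hlow : ∀ s, 0 ≤ s → Mzero a c ≤ u s) (hup : ∀ s, 0 ≤ s → u s ≤ N)
    (hτub : τ = a + c * N)
    (T₀ : ℝ) (hsgn : ∀ t, T₀ < t → u t ≤ 0) :
    ∃ T ≥ (0:ℝ), MonotoneOn u (Set.Ici T) ∧ Filter.Tendsto u Filter.atTop (nhds 0) := by
  have hsamp := SDDE.samp hcpos hu hlow hup hτub
  set T := max T₀ 0 + τ + 1 with hTdef
  have hmax0 : (0:ℝ) ≤ max T₀ 0 := le_max_right _ _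
  have hmaxT₀ : T₀ ≤ max T₀ 0 := le_max_left _ _
  have hT0 : 0 ≤ T := by rw [hTdef]; linarith
  have hgen : ∀ T' : ℝ, T ≤ T' →
      ∀ x ∈ interior (Set.Ici T'), deriv u x = μ * u x + σ * u (x - a - c * u x) ∧
        0 < x ∧ T₀ < x ∧ T₀ < x - a - c * u x ∧ T' - τ ≤ x - a - c * u x := by
    intro T' hT' x hx
    rw [interior_Ici] at hx
    have hx' : T' < x := hx
    have hx0 : 0 < x := by rw [hTdef] at hT'; linarith
    have hsx := hsamp x hx0.le
    refine ⟨(hu.2.2.2 x hx0).deriv, hx0, by rw [hTdef] at hT'; linarith, ?_, by linarith [hsx.1]⟩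
    rw [hTdef] at hT'
    have := hsx.1
    linarith
  have hmono : MonotoneOn u (Set.Ici T) := by
    apply monotoneOn_of_deriv_nonneg (convex_Ici T) hu.1.continuousOn
    · intro x hx
      rw [interior_Ici] at hx
      have hx' : T < x := hx
      have hx0 : 0 < x := by linarith
      exact (hu.2.2.2 x hx0).differentiableAt.differentiableWithinAt
    · intro x hx
      obtain ⟨hdx, hx0, hxT₀, hsxT₀, _⟩ := hgen T le_rfl x hx
      rw [hdx]
      have h1 : u x ≤ 0 := hsgn x hxT₀
      have h2 : u (x - a - c * u x) ≤ 0 := hsgn _ hsxT₀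
      nlinarith
  set L := sSup (u '' Set.Ici T) with hL
  have himgne : (u '' Set.Ici T).Nonempty := ⟨u T, T, Set.self_mem_Ici, rfl⟩
  have hbdd : BddAbove (u '' Set.Ici T) := by
    refine ⟨N, ?_⟩
    rintro y ⟨x, hx, rfl⟩
    exact hup x (le_trans hT0 hx)
  have hLle : ∀ t, T ≤ t → u t ≤ L := fun t ht => le_csSup hbdd ⟨t, ht, rfl⟩
  have htendL : Filter.Tendsto u Filter.atTop (nhds L) := by
    rw [Metric.tendsto_atTop]
    intro ε hε
    obtain ⟨y, ⟨t₀, ht₀, rfl⟩, hy⟩ := exists_lt_of_lt_csSup himgne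
      (show L - ε < sSup (u '' Set.Ici T) by rw [← hL]; linarith)
    refine ⟨t₀, fun t hts => ?_⟩
    have h1 : u t₀ ≤ u t := hmono ht₀ (le_trans ht₀ hts) hts
    have h2 : u t ≤ L := hLle t (le_trans ht₀ hts)
    rw [Real.dist_eq, abs_lt]
    constructor <;> linarith
  have hLge : L ≤ 0 := by
    refine le_of_tendsto htendL ?_
    refine Filter.eventually_atTop.mpr ⟨T, fun t ht => hsgn t ?_⟩
    rw [hTdef] at ht; linarith
  have hL0 : L = 0 := by
    rcases eq_or_lt_of_le hLge with h | h
    · exact h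
    · exfalso
      set T₁ := T + τ + 1 with hT₁def
      have hTT₁ : T ≤ T₁ := by rw [hT₁def]; linarith
      have hμσL : 0 < (μ + σ) * L := mul_pos_of_neg_of_neg (by linarith) h
      have hmono2 : MonotoneOn (fun t => u t - (μ + σ) * L * t) (Set.Ici T₁) := by
        have hcont2 : Continuous fun t : ℝ => u t - (μ + σ) * L * t := by
          have h := hu.1; fun_prop
        apply monotoneOn_of_deriv_nonneg (convex_Ici T₁) hcont2.continuousOn
        · intro x hx
          rw [interior_Ici] at hx
          have hx' : T₁ < x := hx
          have hx0 : 0 < x := by linarith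
          exact ((hu.2.2.2 x hx0).sub
            ((hasDerivAt_id x).const_mul ((μ + σ) * L))).differentiableAt.differentiableWithinAt
        · intro x hx
          obtain ⟨hdx, hx0, hxT₀, hsxT₀, hsxlb⟩ := hgen T₁ hTT₁ x hx
          rw [interior_Ici] at hx
          have hder : HasDerivAt (fun t => u t - (μ + σ) * L * t)
              ((μ * u x + σ * u (x - a - c * u x)) - (μ + σ) * L * 1) x :=
            (hu.2.2.2 x hx0).sub ((hasDerivAt_id x).const_mul ((μ + σ) * L))
          rw [hder.deriv]
          have hx' : T₁ < x := hx
          have h1 : u x ≤ L := hLle x (by linarith)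
          have h2 : u (x - a - c * u x) ≤ L := hLle _ (by rw [hT₁def] at hsxlb; linarith)
          have h3 : μ * L ≤ μ * u x := mul_le_mul_of_nonpos_left h1 hμ.le
          have h4 : σ * L ≤ σ * u (x - a - c * u x) := mul_le_mul_of_nonpos_left h2 hσ.le
          nlinarith
      set D := (1 - u T₁) / ((μ + σ) * L) with hDdef
      have hD0 : 0 ≤ D := by
        apply div_nonneg _ hμσL.le
        have : u T₁ ≤ L := hLle T₁ hTT₁
        linarith
      have happ := hmono2 (Set.self_mem_Ici) (show T₁ + D ∈ Set.Ici T₁ by simp [hD0])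
        (by linarith : T₁ ≤ T₁ + D)
      have hcomp : (μ + σ) * L * D = 1 - u T₁ := by
        have hne' : (μ + σ) * L ≠ 0 := ne_of_gt hμσL
        rw [hDdef, mul_div_assoc', div_eq_iff hne']; ring
      have hfin : 1 ≤ u (T₁ + D) := by
        simp only [] at happ
        nlinarith [happ]
      have : u (T₁ + D) ≤ 0 := hsgn _ (by rw [hT₁def, hTdef]; linarith)
      linarith
  rw [hL0] at htendL
  exact ⟨T, hT0, hmono, htendL⟩

end aux


/-- Solution dichotomy: eventual monotone convergence to `0`, or oscillation forever. -/
theorem sdde_solution_dichotomy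
    (a c μ σ N τ : ℝ) (φ u : ℝ → ℝ)
    (ha : 0 < a) (hc : 0 < c) (hμ : μ < 0) (hσ : σ < 0)
    (hN : N = max (Nzero a c μ σ) (φ 0)) (hτ : τ = a + c * N)
    (hφcont : Continuous φ)
    (hφ : ∀ t ∈ Set.Icc (-τ) (0:ℝ), Mzero a c ≤ φ t)
    (hu : IsSDDESolution a c μ σ φ u) :
    Xor'
      (∃ T ≥ (0:ℝ), (MonotoneOn u (Set.Ici T) ∨ AntitoneOn u (Set.Ici T)) ∧
        Filter.Tendsto u Filter.atTop (nhds 0))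
      (∀ T > (0:ℝ),
        (∃ T₁ > T, IsLocalMax u T₁ ∧ 0 < u T₁) ∧
        (∃ T₂ > T, IsLocalMin u T₂ ∧ u T₂ < 0) ∧
        (∃ t ∈ Set.Icc T (T + τ), u t * deriv u t < 0)) := by

  have hN0pos : 0 < Nzero a c μ σ := by
    unfold Nzero
    exact div_pos_iff.mpr (Or.inr ⟨by nlinarith, by nlinarith⟩)
  have hN0le : Nzero a c μ σ ≤ N := by rw [hN]; exact le_max_left _ _
  have hφ0le : φ 0 ≤ N := by rw [hN]; exact le_max_right _ _
  have hNpos : 0 < N := lt_of_lt_of_le hN0pos hN0le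
  have hτpos : 0 < τ := by rw [hτ]; nlinarith
  have hlow : ∀ s, 0 ≤ s → Mzero a c ≤ u s := SDDE.lower ha hc hμ hσ hτpos hφ hu
  have hup : ∀ s, 0 ≤ s → u s ≤ N :=
    SDDE.upper ha hc hμ hσ hN0le hφ0le hτ hτpos hφcont hφ hu
  by_cases hP : ∀ T' : ℝ, (∃ t > T', 0 < u t) ∧ (∃ t > T', u t < 0)
  · refine Or.inr ⟨?_, ?_⟩
    · intro T hT
      have hext := SDDE.extrema hu (fun T' => (hP T').1) (fun T' => (hP T').2) T
      exact ⟨hext.1, hext.2,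
        SDDE.window hμ hσ hτpos hu hc hlow hup hτ (fun T' => (hP T').1) T hT⟩
    · rintro ⟨Tb, hTb0, hmono | hanti, htend⟩
      · obtain ⟨t, htTb, hut⟩ := (hP Tb).1
        have hle : u t ≤ 0 := by
          refine ge_of_tendsto htend ?_
          refine Filter.eventually_atTop.mpr ⟨t, fun s hs => ?_⟩
          exact hmono (le_of_lt htTb) (le_trans (le_of_lt htTb) hs) hs
        linarith
      · obtain ⟨t, htTb, hut⟩ := (hP Tb).2
        have hge : 0 ≤ u t := by
          refine le_of_tendsto htend ?_
          refine Filter.eventually_atTop.mpr ⟨t, fun s hs => ?_⟩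
          exact hanti (le_of_lt htTb) (le_trans (le_of_lt htTb) hs) hs
        linarith
  · obtain ⟨T', hT'⟩ := not_forall.mp hP
    rw [not_and_or] at hT'
    have hmaxT' : T' ≤ max T' 0 := le_max_left _ _
    have hmax0' : (0:ℝ) ≤ max T' 0 := le_max_right _ _
    rcases hT' with h | h
    · push_neg at h
      obtain ⟨T, hT0, hmono, htend⟩ := SDDE.nonosc_neg hμ hσ hτpos hc hu hlow hup hτ T' h
      refine Or.inl ⟨⟨T, hT0, Or.inl hmono, htend⟩, ?_⟩
      intro hB
      obtain ⟨⟨T₁, hT₁gt, _, hT₁pos⟩, _, _⟩ := hB (max T' 0 + 1) (by linarith)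
      have := h T₁ (by linarith)
      linarith
    · push_neg at h
      obtain ⟨T, hT0, hanti, htend⟩ := SDDE.nonosc_pos hμ hσ hτpos hc hu hlow hup hτ T' h
      refine Or.inl ⟨⟨T, hT0, Or.inr hanti, htend⟩, ?_⟩
      intro hB
      obtain ⟨_, ⟨T₂, hT₂gt, _, hT₂neg⟩, _⟩ := hB (max T' 0 + 1) (by linarith)
      have := h T₂ (by linarith)
      linarith
end

section
/- (Extremum inequalities, first-order bound.) Let a > 0, c > 0 and σ ≤ μ < 0. Let u be a solution of the SDDE, let M ∈ [M₀, 0) and N > 0, set τ = a + c·N, and suppose t* > 2τ satisfies u(s) ∈ [M, N] for all s ∈ [t* − 2τ, t*] and u'(t*) = 0. Set v = u(t*). Then: if v < 0 then Q₁(v, N) ≥ 0, and if v > 0 then Q₁(v, M) ≤ 0. -/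
open Real Set Filter

/-- `Q₁(v,x) = (1 + (μ/σ) e^{μ(a+cv)}) v + (σ/μ) x (1 - e^{μ(a+cv)})`. -/
noncomputable def Qone (a c μ σ v x : ℝ) : ℝ :=
  (1 + (μ / σ) * Real.exp (μ * (a + c * v))) * v +
    (σ / μ) * x * (1 - Real.exp (μ * (a + c * v)))

set_option maxHeartbeats 1600000 in
/-- Extremum inequalities, first-order bound. -/
theorem sdde_extremum_Q1
    (a c μ σ M N τ : ℝ) (φ u : ℝ → ℝ) (tstar : ℝ)
    (ha : 0 < a) (hc : 0 < c) (hσμ : σ ≤ μ) (hμ : μ < 0)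
    (hu : IsSDDESolution a c μ σ φ u)
    (hM : M ∈ Set.Ico (Mzero a c) (0:ℝ)) (hN : 0 < N) (hτ : τ = a + c * N)
    (ht : 2 * τ < tstar)
    (hbd : ∀ s ∈ Set.Icc (tstar - 2 * τ) tstar, u s ∈ Set.Icc M N)
    (hderiv : deriv u tstar = 0) :
    (u tstar < 0 → 0 ≤ Qone a c μ σ (u tstar) N) ∧
      (0 < u tstar → Qone a c μ σ (u tstar) M ≤ 0) := by
  obtain ⟨hcont, -, -, hode⟩ := hu
  have hσ : σ < 0 := lt_of_le_of_lt hσμ hμ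
  have hσ0 : σ ≠ 0 := ne_of_lt hσ
  have hμ0 : μ ≠ 0 := ne_of_lt hμ
  have hτpos : 0 < τ := by rw [hτ]; positivity
  have htpos : 0 < tstar := by linarith
  have hvmem : u tstar ∈ Set.Icc M N := hbd tstar ⟨by linarith, le_refl _⟩
  have hMlb : -a / c ≤ M := hM.1
  have hMneg : M < 0 := hM.2
  have haM : 0 ≤ a + c * M := by
    have h := hMlb
    rw [div_le_iff₀ hc] at h
    nlinarith
  set v : ℝ := u tstar with hv
  set Δ : ℝ := a + c * v with hΔdef
  have hΔ0 : 0 ≤ Δ := by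
    have h1 := hvmem.1
    rw [hΔdef]; nlinarith
  have hΔτ : Δ ≤ τ := by
    have h2 := hvmem.2
    rw [hτ, hΔdef]; nlinarith
  set t0 : ℝ := tstar - Δ with ht0def
  have ht0pos : 0 < t0 := by rw [ht0def]; linarith
  have ht0le : t0 ≤ tstar := by rw [ht0def]; linarith
  have harg : tstar - a - c * u tstar = t0 := by
    rw [ht0def, hΔdef, hv]; ring
  have hext : μ * v + σ * u t0 = 0 := by
    have hd := (hode tstar htpos).deriv
    rw [hderiv, harg] at hd
    rw [hv]; linarith [hd]
  have hu0 : u t0 = -(μ * v) / σ := by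
    rw [eq_div_iff hσ0]
    linear_combination hext
  -- FTC for g(s) = exp(-μ s) u(s)
  have hcont2 : Continuous fun s => Real.exp (-μ * s) * (σ * u (s - a - c * u s)) := by
    apply Continuous.mul
    · exact Real.continuous_exp.comp (continuous_const.mul continuous_id)
    · exact continuous_const.mul (hcont.comp (by continuity))
  have hint : IntervalIntegrable (fun s => Real.exp (-μ * s) * (σ * u (s - a - c * u s)))
      MeasureTheory.volume t0 tstar := hcont2.intervalIntegrable _ _
  have hFTC : ∫ s in t0..tstar, Real.exp (-μ * s) * (σ * u (s - a - c * u s))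
      = Real.exp (-μ * tstar) * u tstar - Real.exp (-μ * t0) * u t0 := by
    apply intervalIntegral.integral_eq_sub_of_hasDerivAt (f := fun s => Real.exp (-μ * s) * u s)
    · intro s hs
      rw [Set.uIcc_of_le ht0le] at hs
      have hs0 : 0 < s := lt_of_lt_of_le ht0pos hs.1
      have h1 : HasDerivAt (fun s => Real.exp (-μ * s)) (Real.exp (-μ * s) * (-μ)) s := by
        simpa using ((hasDerivAt_id s).const_mul (-μ)).exp
      have h2 := hode s hs0
      convert h1.mul h2 using 1
      · rfl
      · rfl
      ring
    · exact hint
  have hexpint : ∫ s in t0..tstar, Real.exp (-μ * s)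
      = Real.exp (-μ * tstar) / (-μ) - Real.exp (-μ * t0) / (-μ) := by
    apply intervalIntegral.integral_eq_sub_of_hasDerivAt
      (f := fun s => Real.exp (-μ * s) / (-μ))
    · intro s _
      have h1 : HasDerivAt (fun s => Real.exp (-μ * s)) (Real.exp (-μ * s) * (-μ)) s := by
        simpa using ((hasDerivAt_id s).const_mul (-μ)).exp
      have h2 := h1.div_const (-μ)
      convert h2 using 1
      · rfl
      rw [mul_div_assoc, div_self (neg_ne_zero.mpr hμ0), mul_one]
    · exact (Real.continuous_exp.comp (continuous_const.mul continuous_id)).intervalIntegrable _ _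
  have hdelayed : ∀ s ∈ Set.Icc t0 tstar, u (s - a - c * u s) ∈ Set.Icc M N := by
    intro s hs
    have hus : u s ∈ Set.Icc M N := by
      refine hbd s ⟨?_, hs.2⟩
      have := hs.1
      rw [ht0def] at this
      linarith
    refine hbd _ ⟨?_, ?_⟩
    · have h1 : a + c * u s ≤ τ := by rw [hτ]; nlinarith [hus.2]
      have := hs.1
      rw [ht0def] at this
      linarith
    · have h1 : 0 ≤ a + c * u s := by nlinarith [hus.1]
      linarith [hs.2]
  have hPE : Real.exp (-μ * t0) = Real.exp (-μ * tstar) * Real.exp (μ * Δ) := by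
    rw [← Real.exp_add]
    congr 1
    rw [ht0def]; ring
  set P : ℝ := Real.exp (-μ * tstar) with hPdef
  set E : ℝ := Real.exp (μ * Δ) with hEdef
  have hP : 0 < P := Real.exp_pos _
  constructor
  · intro _
    have hmono : ∫ s in t0..tstar, Real.exp (-μ * s) * (σ * N)
        ≤ ∫ s in t0..tstar, Real.exp (-μ * s) * (σ * u (s - a - c * u s)) := by
      apply intervalIntegral.integral_mono_on ht0le
      · exact ((Real.continuous_exp.comp (continuous_const.mul continuous_id)).mul
          continuous_const).intervalIntegrable _ _
      · exact hint
      · intro s hs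
        have hd := (hdelayed s hs).2
        have hexp : 0 < Real.exp (-μ * s) := Real.exp_pos _
        exact mul_le_mul_of_nonneg_left (by nlinarith) hexp.le
    rw [hFTC, hu0, hPE] at hmono
    rw [intervalIntegral.integral_mul_const, hexpint, hPE] at hmono
    have hid : P * v - P * E * (-(μ * v) / σ)
        - (P / (-μ) - P * E / (-μ)) * (σ * N)
        = P * ((1 + μ / σ * E) * v + σ / μ * N * (1 - E)) := by
      ring
    have hPQ : 0 ≤ P * ((1 + μ / σ * E) * v + σ / μ * N * (1 - E)) := by
      rw [← hid]; linarith [hmono]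
    have hQ : 0 ≤ (1 + μ / σ * E) * v + σ / μ * N * (1 - E) := by
      nlinarith [hPQ, hP]
    simp only [Qone]
    rw [← hΔdef, ← hEdef]
    exact hQ
  · intro _
    have hmono : ∫ s in t0..tstar, Real.exp (-μ * s) * (σ * u (s - a - c * u s))
        ≤ ∫ s in t0..tstar, Real.exp (-μ * s) * (σ * M) := by
      apply intervalIntegral.integral_mono_on ht0le
      · exact hint
      · exact ((Real.continuous_exp.comp (continuous_const.mul continuous_id)).mul
          continuous_const).intervalIntegrable _ _
      · intro s hs
        have hd := (hdelayed s hs).1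
        have hexp : 0 < Real.exp (-μ * s) := Real.exp_pos _
        exact mul_le_mul_of_nonneg_left (by nlinarith) hexp.le
    rw [hFTC, hu0, hPE] at hmono
    rw [intervalIntegral.integral_mul_const, hexpint, hPE] at hmono
    have hid : (P / (-μ) - P * E / (-μ)) * (σ * M)
        - (P * v - P * E * (-(μ * v) / σ))
        = - (P * ((1 + μ / σ * E) * v + σ / μ * M * (1 - E))) := by
      ring
    have hPQ : P * ((1 + μ / σ * E) * v + σ / μ * M * (1 - E)) ≤ 0 := by
      nlinarith [hmono, hid]
    have hQ : (1 + μ / σ * E) * v + σ / μ * M * (1 - E) ≤ 0 := by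
      nlinarith [hPQ, hP]
    simp only [Qone]
    rw [← hΔdef, ← hEdef]
    exact hQ
end

section
/- (Extremum inequalities, second-order bound.) Let a > 0, c > 0 and σ ≤ μ < 0. Let u be a solution of the SDDE, let M ∈ [M₀, 0) and N > 0, set τ = a + c·N, and suppose t* > 3τ satisfies u(s) ∈ [M, N] for all s ∈ [t* − 3τ, t*] and u'(t*) = 0. Set v = u(t*). Then: if v < 0 then Q₂(v, N, M) ≥ 0, and if v > 0 then Q₂(v, M, N) ≤ 0. -/
open Real Set Filter

/-- `D(x,y) = (|μ|+|σ|)(1 + (|μ|+|σ|) max(|x|,|y|) c) max(|x|,|y|)`. -/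
noncomputable def Dfun (c μ σ x y : ℝ) : ℝ :=
  (|μ| + |σ|) * (1 + (|μ| + |σ|) * max |x| |y| * c) * max |x| |y|

/-- The piecewise function `Q₂(v,x,y)`. -/
noncomputable def Qtwo (a c μ σ v x y : ℝ) : ℝ :=
  let s := Real.sign (y - x)
  let D := Dfun c μ σ x y
  if -s * (x + (μ / σ) * v) / D < a + c * v then
    (μ / σ) * v * Real.exp (μ * (a + c * v)) -
      (σ / μ) * (s * (D / μ) *
        (Real.exp (-μ * s * (x + (μ / σ) * v) / D) - 1) +
        x * Real.exp (μ * (a + c * v)))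
  else
    v * Real.exp (μ * (a + c * v)) * (1 + μ / σ) -
      s * (σ / μ) * D *
        ((1 / μ) * (Real.exp (μ * (a + c * v)) - 1) -
          (a + c * v) * Real.exp (μ * (a + c * v)))

lemma sdde_expDeriv (μ x : ℝ) :
    HasDerivAt (fun r => Real.exp (μ * r)) (μ * Real.exp (μ * x)) x := by
  have h : HasDerivAt (fun r : ℝ => μ * r) μ x := by
    simpa using (hasDerivAt_id x).const_mul μ
  simpa [mul_comm] using h.exp

lemma sdde_int_lin (μ D W : ℝ) (hμ : μ ≠ 0) (p q : ℝ) :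
    ∫ r in p..q, Real.exp (μ * r) * (W + D * r)
      = (Real.exp (μ * q) * (W + D * q) / μ - D * Real.exp (μ * q) / μ ^ 2)
        - (Real.exp (μ * p) * (W + D * p) / μ - D * Real.exp (μ * p) / μ ^ 2) := by
  apply intervalIntegral.integral_eq_sub_of_hasDerivAt
  · intro x _
    have h1 : HasDerivAt (fun r => Real.exp (μ * r) * (W + D * r) / μ)
        ((μ * Real.exp (μ * x) * (W + D * x) + Real.exp (μ * x) * D) / μ) x := by
      have hl : HasDerivAt (fun r : ℝ => W + D * r) D x := by
        simpa using ((hasDerivAt_id x).const_mul D).const_add W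
      exact ((sdde_expDeriv μ x).mul hl).div_const μ
    have h2 : HasDerivAt (fun r => D * Real.exp (μ * r) / μ ^ 2)
        (D * (μ * Real.exp (μ * x)) / μ ^ 2) x :=
      ((sdde_expDeriv μ x).const_mul D).div_const (μ ^ 2)
    have := h1.sub h2
    convert this using 1
    · funext r; simp only [Pi.sub_apply]
    field_simp
    ring
  · exact (Continuous.mul (by fun_prop) (by fun_prop)).intervalIntegrable p q

lemma sdde_int_const (μ X : ℝ) (hμ : μ ≠ 0) (p q : ℝ) :
    ∫ r in p..q, Real.exp (μ * r) * X
      = X * Real.exp (μ * q) / μ - X * Real.exp (μ * p) / μ := by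
  apply intervalIntegral.integral_eq_sub_of_hasDerivAt
  · intro x _
    have : HasDerivAt (fun r => X * Real.exp (μ * r) / μ)
        (X * (μ * Real.exp (μ * x)) / μ) x :=
      ((sdde_expDeriv μ x).const_mul X).div_const μ
    refine this.congr_deriv ?_
    field_simp
  · exact (Continuous.mul (by fun_prop) continuous_const).intervalIntegrable p q

lemma sdde_Jcont (μ D W X : ℝ) :
    Continuous (fun r => Real.exp (μ * r) * min X (W + D * r)) := by
  apply Continuous.mul (by fun_prop)
  exact Continuous.min continuous_const (by fun_prop)

lemma sdde_Jcalc_lt (μ D W X Δ : ℝ) (hμ : μ ≠ 0) (hD : 0 < D) (hWX : W ≤ X)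
    (h : (X - W) / D < Δ) :
    ∫ r in (0:ℝ)..Δ, Real.exp (μ * r) * min X (W + D * r)
      = (X * Real.exp (μ * Δ) - W) / μ
        - (D / μ ^ 2) * (Real.exp (μ * ((X - W) / D)) - 1) := by
  set r₀ := (X - W) / D with hr₀
  have h0 : 0 ≤ r₀ := div_nonneg (by linarith) hD.le
  have hDr : D * r₀ = X - W := by rw [hr₀]; field_simp
  have i1 : IntervalIntegrable (fun r => Real.exp (μ * r) * min X (W + D * r))
      MeasureTheory.volume 0 r₀ := (sdde_Jcont μ D W X).intervalIntegrable _ _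
  have i2 : IntervalIntegrable (fun r => Real.exp (μ * r) * min X (W + D * r))
      MeasureTheory.volume r₀ Δ := (sdde_Jcont μ D W X).intervalIntegrable _ _
  rw [← intervalIntegral.integral_add_adjacent_intervals i1 i2]
  have e1 : ∫ r in (0:ℝ)..r₀, Real.exp (μ * r) * min X (W + D * r)
      = ∫ r in (0:ℝ)..r₀, Real.exp (μ * r) * (W + D * r) := by
    apply intervalIntegral.integral_congr
    intro r hr
    rw [uIcc_of_le h0] at hr
    have : W + D * r ≤ X := by nlinarith [hr.1, hr.2]
    simp [min_eq_right this]
  have e2 : ∫ r in r₀..Δ, Real.exp (μ * r) * min X (W + D * r)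
      = ∫ r in r₀..Δ, Real.exp (μ * r) * X := by
    apply intervalIntegral.integral_congr
    intro r hr
    rw [uIcc_of_le h.le] at hr
    have : X ≤ W + D * r := by nlinarith [hr.1]
    simp [min_eq_left this]
  rw [e1, e2, sdde_int_lin μ D W hμ, sdde_int_const μ X hμ]
  have hx : W + D * r₀ = X := by linarith
  rw [hx]
  field_simp
  simp only [mul_zero, Real.exp_zero]
  ring

lemma sdde_Jcalc_ge (μ D W X Δ : ℝ) (hμ : μ ≠ 0) (hD : 0 < D) (hΔ : 0 ≤ Δ)
    (h : ¬ ((X - W) / D < Δ)) :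
    ∫ r in (0:ℝ)..Δ, Real.exp (μ * r) * min X (W + D * r)
      = (Real.exp (μ * Δ) * (W + D * Δ) - W) / μ
        - (D / μ ^ 2) * (Real.exp (μ * Δ) - 1) := by
  push_neg at h
  have e1 : ∫ r in (0:ℝ)..Δ, Real.exp (μ * r) * min X (W + D * r)
      = ∫ r in (0:ℝ)..Δ, Real.exp (μ * r) * (W + D * r) := by
    apply intervalIntegral.integral_congr
    intro r hr
    rw [uIcc_of_le hΔ] at hr
    have hr2 : r ≤ (X - W) / D := le_trans hr.2 h
    have : W + D * r ≤ X := by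
      have := (le_div_iff₀ hD).mp hr2
      nlinarith
    simp [min_eq_right this]
  rw [e1, sdde_int_lin μ D W hμ]
  field_simp
  simp only [mul_zero, Real.exp_zero]
  ring

lemma sdde_voc (a c μ σ : ℝ) (u : ℝ → ℝ) (hcont : Continuous u)
    (hde : ∀ t > (0:ℝ), HasDerivAt u (μ * u t + σ * u (t - a - c * u t)) t)
    (t₁ t₂ : ℝ) (h1 : 0 < t₁) (h12 : t₁ ≤ t₂) :
    ∫ s in t₁..t₂, Real.exp (-μ * s) * (σ * u (s - a - c * u s))
      = Real.exp (-μ * t₂) * u t₂ - Real.exp (-μ * t₁) * u t₁ := by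
  apply intervalIntegral.integral_eq_sub_of_hasDerivAt
  · intro x hx
    rw [uIcc_of_le h12] at hx
    have hx0 : 0 < x := lt_of_lt_of_le h1 hx.1
    have hux := hde x hx0
    have hexp := sdde_expDeriv (-μ) x
    have := hexp.mul hux
    refine this.congr_deriv ?_
    ring
  · apply Continuous.intervalIntegrable
    apply Continuous.mul (by fun_prop)
    exact continuous_const.mul (hcont.comp (by fun_prop))

set_option maxHeartbeats 1600000 in
/-- Extremum inequalities, second-order bound. -/
theorem sdde_extremum_Q2
    (a c μ σ M N τ : ℝ) (φ u : ℝ → ℝ) (tstar : ℝ)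
    (ha : 0 < a) (hc : 0 < c) (hσμ : σ ≤ μ) (hμ : μ < 0)
    (hu : IsSDDESolution a c μ σ φ u)
    (hM : M ∈ Set.Ico (Mzero a c) (0:ℝ)) (hN : 0 < N) (hτ : τ = a + c * N)
    (ht : 3 * τ < tstar)
    (hbd : ∀ s ∈ Set.Icc (tstar - 3 * τ) tstar, u s ∈ Set.Icc M N)
    (hderiv : deriv u tstar = 0) :
    (u tstar < 0 → 0 ≤ Qtwo a c μ σ (u tstar) N M) ∧
      (0 < u tstar → Qtwo a c μ σ (u tstar) M N ≤ 0) := by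
  obtain ⟨hucont, -, -, hSDDE⟩ := hu
  have hσ : σ < 0 := lt_of_le_of_lt hσμ hμ
  have hσ0 : σ ≠ 0 := ne_of_lt hσ
  have hμ0 : μ ≠ 0 := ne_of_lt hμ
  have hM0 : -a / c ≤ M := hM.1
  have hM2 : M < 0 := hM.2
  have hcM : 0 ≤ a + c * M := by
    have h1 : c * (-a / c) ≤ c * M := mul_le_mul_of_nonneg_left hM0 hc.le
    have h2 : c * (-a / c) = -a := by field_simp
    linarith
  have hτpos : 0 < τ := by nlinarith
  have ht0 : 0 < tstar := by linarith
  have hvmem : M ≤ u tstar ∧ u tstar ≤ N := hbd tstar ⟨by linarith, le_refl tstar⟩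
  have hΔ0 : 0 ≤ a + c * u tstar := by nlinarith [hvmem.1]
  have hΔτ : a + c * u tstar ≤ τ := by nlinarith [hvmem.2]
  set Δ : ℝ := a + c * u tstar with hΔdef
  set t₁ : ℝ := tstar - Δ with ht₁def
  have ht₁pos : 0 < t₁ := by
    rw [ht₁def]; linarith
  have ht₁le : t₁ ≤ tstar := by rw [ht₁def]; linarith
  have hargs : tstar - a - c * u tstar = t₁ := by rw [ht₁def, hΔdef]; ring
  have hWeq : σ * u t₁ + μ * u tstar = 0 := by
    have h := (hSDDE tstar ht0).deriv
    rw [hderiv, hargs] at h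
    linarith
  -- bound constant
  set K : ℝ := max |M| |N| with hK
  have hbK : ∀ s ∈ Set.Icc (tstar - 3 * τ) tstar, |u s| ≤ K := by
    intro s hs
    obtain ⟨h1, h2⟩ := hbd s hs
    rw [abs_le]
    constructor
    · have := neg_abs_le M
      have := le_max_left |M| |N|
      linarith
    · have := le_abs_self N
      have := le_max_right |M| |N|
      linarith
  set D : ℝ := Dfun c μ σ M N with hDdef
  have hDsymm : Dfun c μ σ N M = D := by
    rw [hDdef]; unfold Dfun; rw [max_comm]
  have hDval : D = (|μ| + |σ|) * (1 + (|μ| + |σ|) * K * c) * K := by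
    rw [hDdef]; unfold Dfun; rw [← hK]
  have hKpos : 0 < K := lt_of_lt_of_le (abs_pos.mpr (ne_of_gt hN)) (le_max_right _ _)
  have hμabs : 0 < |μ| := abs_pos.mpr hμ0
  have habs : 0 < |μ| + |σ| := by linarith [abs_nonneg σ]
  have hDpos : 0 < D := by
    rw [hDval]
    have h2 : 0 < 1 + (|μ| + |σ|) * K * c := by positivity
    positivity
  -- the delayed argument stays in the window
  have hα : ∀ p ∈ Set.Icc (tstar - 2 * τ) tstar,
      p - a - c * u p ∈ Set.Icc (tstar - 3 * τ) tstar := by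
    intro p hp
    have hpmem : p ∈ Set.Icc (tstar - 3 * τ) tstar := ⟨by linarith [hp.1], hp.2⟩
    obtain ⟨h1, h2⟩ := hbd p hpmem
    constructor
    · have h3 : c * u p ≤ c * N := mul_le_mul_of_nonneg_left h2 hc.le
      have := hp.1
      rw [hτ] at *
      linarith
    · have h3 : c * M ≤ c * u p := mul_le_mul_of_nonneg_left h1 hc.le
      linarith [hp.2]
  -- slope bound
  have hslope : ∀ p ∈ Set.Icc (tstar - 2 * τ) tstar,
      |μ * u p + σ * u (p - a - c * u p)| ≤ (|μ| + |σ|) * K := by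
    intro p hp
    have hpmem : p ∈ Set.Icc (tstar - 3 * τ) tstar := ⟨by linarith [hp.1], hp.2⟩
    have h1 := hbK p hpmem
    have h2 := hbK _ (hα p hp)
    calc |μ * u p + σ * u (p - a - c * u p)|
        ≤ |μ * u p| + |σ * u (p - a - c * u p)| := abs_add_le _ _
      _ = |μ| * |u p| + |σ| * |u (p - a - c * u p)| := by rw [abs_mul, abs_mul]
      _ ≤ |μ| * K + |σ| * K := by
          gcongr
      _ = (|μ| + |σ|) * K := by ring
  have hsub2 : ∀ s ∈ Set.Icc t₁ tstar, s ∈ Set.Icc (tstar - 2 * τ) tstar := by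
    intro s hs
    exact ⟨by rw [ht₁def] at hs; linarith [hs.1], hs.2⟩
  -- Lipschitz estimate for w(s) = u(s - a - c u(s))
  have hwlip : ∀ s ∈ Set.Icc t₁ tstar,
      |u (s - a - c * u s) - u t₁| ≤ D * (tstar - s) := by
    have hd : ∀ s ∈ Set.Icc t₁ tstar,
        HasDerivWithinAt (fun s => u (s - a - c * u s))
          ((fun s => (μ * u (s - a - c * u s) +
              σ * u ((s - a - c * u s) - a - c * u (s - a - c * u s))) *
            (1 - c * (μ * u s + σ * u (s - a - c * u s)))) s)
          (Set.Icc t₁ tstar) s := by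
      intro s hs
      have hs0 : 0 < s := lt_of_lt_of_le ht₁pos hs.1
      have hinner : HasDerivAt (fun s => s - a - c * u s)
          (1 - c * (μ * u s + σ * u (s - a - c * u s))) s := by
        exact ((hasDerivAt_id s).sub_const a).sub ((hSDDE s hs0).const_mul c)
      have hαpos : 0 < s - a - c * u s := by
        have := (hα s (hsub2 s hs)).1
        linarith
      have houter := hSDDE _ hαpos
      exact (houter.comp s hinner).hasDerivWithinAt
    have hb : ∀ s ∈ Set.Icc t₁ tstar,
        ‖(fun s => (μ * u (s - a - c * u s) +
              σ * u ((s - a - c * u s) - a - c * u (s - a - c * u s))) *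
            (1 - c * (μ * u s + σ * u (s - a - c * u s)))) s‖ ≤ D := by
      intro s hs
      have hs2 := hsub2 s hs
      have hαmem : s - a - c * u s ∈ Set.Icc (tstar - 2 * τ) tstar := by
        have h3 := hα s hs2
        obtain ⟨hm1, hm2⟩ := hbd s ⟨by linarith [hs2.1, hτpos], hs.2⟩
        constructor
        · have h4 : c * u s ≤ c * N := mul_le_mul_of_nonneg_left hm2 hc.le
          have h5 := hs.1
          rw [ht₁def] at h5
          rw [hτ] at *
          linarith
        · exact h3.2
      have h1 := hslope _ hαmem
      have h2 := hslope s hs2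
      rw [Real.norm_eq_abs, abs_mul]
      have h3 : |1 - c * (μ * u s + σ * u (s - a - c * u s))|
          ≤ 1 + c * ((|μ| + |σ|) * K) := by
        calc |1 - c * (μ * u s + σ * u (s - a - c * u s))|
            ≤ |1| + |c * (μ * u s + σ * u (s - a - c * u s))| := abs_sub _ _
          _ = 1 + c * |μ * u s + σ * u (s - a - c * u s)| := by
              rw [abs_one, abs_mul, abs_of_pos hc]
          _ ≤ 1 + c * ((|μ| + |σ|) * K) := by gcongr
      calc |μ * u (s - a - c * u s) +
              σ * u ((s - a - c * u s) - a - c * u (s - a - c * u s))| *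
            |1 - c * (μ * u s + σ * u (s - a - c * u s))|
          ≤ ((|μ| + |σ|) * K) * (1 + c * ((|μ| + |σ|) * K)) := by
            apply mul_le_mul h1 h3 (abs_nonneg _) (by positivity)
        _ = D := by rw [hDval]; ring
    intro s hs
    have hstar : tstar ∈ Set.Icc t₁ tstar := ⟨ht₁le, le_refl _⟩
    have := Convex.norm_image_sub_le_of_norm_hasDerivWithin_le hd hb
      (convex_Icc t₁ tstar) hs hstar
    rw [Real.norm_eq_abs, Real.norm_eq_abs] at this
    rw [hargs] at this
    rw [abs_sub_comm]
    calc |u t₁ - u (s - a - c * u s)| ≤ D * |tstar - s| := this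
      _ = D * (tstar - s) := by rw [abs_of_nonneg (by linarith [hs.2])]
  -- w(s) stays in [M, N]
  have hwmem : ∀ s ∈ Set.Icc t₁ tstar,
      M ≤ u (s - a - c * u s) ∧ u (s - a - c * u s) ≤ N := by
    intro s hs
    exact hbd _ (hα s (hsub2 s hs))
  have hWmem : M ≤ u t₁ ∧ u t₁ ≤ N :=
    hbd t₁ ⟨by rw [ht₁def]; linarith, ht₁le⟩
  -- variation of constants
  have hvoc := sdde_voc a c μ σ u hucont hSDDE t₁ tstar ht₁pos ht₁le
  have hEE : Real.exp (-μ * t₁) = Real.exp (μ * Δ) * Real.exp (-μ * tstar) := by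
    rw [← Real.exp_add]; congr 1; rw [ht₁def]; ring
  have hEpos : (0:ℝ) < Real.exp (-μ * tstar) := Real.exp_pos _
  have hfint : IntervalIntegrable
      (fun s => Real.exp (-μ * s) * (σ * u (s - a - c * u s)))
      MeasureTheory.volume t₁ tstar := by
    apply Continuous.intervalIntegrable
    apply Continuous.mul (by fun_prop)
    exact continuous_const.mul (hucont.comp (by fun_prop))
  have hμinv : μ * μ⁻¹ = 1 := mul_inv_cancel₀ hμ0
  have hσinv : σ * σ⁻¹ = 1 := mul_inv_cancel₀ hσ0
  constructor
  · -- case u tstar < 0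
    intro hv
    have hμσv : μ / σ * u tstar = -(u t₁) := by
      field_simp
      linarith [hWeq]
    -- pointwise comparison
    have hgint : IntervalIntegrable
        (fun s => Real.exp (-μ * s) * (σ * min N (u t₁ + D * (tstar - s))))
        MeasureTheory.volume t₁ tstar := by
      apply Continuous.intervalIntegrable
      apply Continuous.mul (by fun_prop)
      apply continuous_const.mul
      exact Continuous.min continuous_const (by fun_prop)
    have hptw : ∀ s ∈ Set.Icc t₁ tstar,
        Real.exp (-μ * s) * (σ * min N (u t₁ + D * (tstar - s)))
          ≤ Real.exp (-μ * s) * (σ * u (s - a - c * u s)) := by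
      intro s hs
      have hlip := hwlip s hs
      have hwle : u (s - a - c * u s) ≤ min N (u t₁ + D * (tstar - s)) := by
        refine le_min (hwmem s hs).2 ?_
        have := (abs_le.mp hlip).1
        linarith [abs_le.mp hlip |>.2]
      have h1 : σ * min N (u t₁ + D * (tstar - s)) ≤ σ * u (s - a - c * u s) :=
        mul_le_mul_of_nonpos_left hwle hσ.le
      exact mul_le_mul_of_nonneg_left h1 (Real.exp_pos _).le
    have hintle := intervalIntegral.integral_mono_on ht₁le hgint hfint hptw
    -- substitution
    have hsub : ∫ s in t₁..tstar,
        Real.exp (-μ * s) * (σ * min N (u t₁ + D * (tstar - s)))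
        = σ * Real.exp (-μ * tstar) *
          ∫ r in (0:ℝ)..Δ, Real.exp (μ * r) * min N (u t₁ + D * r) := by
      have e : EqOn (fun s => Real.exp (-μ * s) * (σ * min N (u t₁ + D * (tstar - s))))
          (fun s => σ * Real.exp (-μ * tstar) *
            (Real.exp (μ * (tstar - s)) * min N (u t₁ + D * (tstar - s))))
          (Set.uIcc t₁ tstar) := by
        intro s _
        have hx : Real.exp (-μ * tstar) * Real.exp (μ * (tstar - s))
            = Real.exp (-μ * s) := by
          rw [← Real.exp_add]; congr 1; ring
        simp only
        rw [← hx]; ring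
      rw [intervalIntegral.integral_congr e, intervalIntegral.integral_const_mul]
      congr 1
      have hc2 := intervalIntegral.integral_comp_sub_left
        (fun r => Real.exp (μ * r) * min N (u t₁ + D * r)) tstar (a := t₁) (b := tstar)
      rw [hc2, sub_self, show tstar - t₁ = Δ by rw [ht₁def]; ring]
    rw [hvoc, hsub, hEE] at hintle
    have key : σ * (∫ r in (0:ℝ)..Δ, Real.exp (μ * r) * min N (u t₁ + D * r))
        ≤ u tstar - u t₁ * Real.exp (μ * Δ) := by
      have h2 : Real.exp (-μ * tstar) * (σ *
            (∫ r in (0:ℝ)..Δ, Real.exp (μ * r) * min N (u t₁ + D * r)))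
          ≤ Real.exp (-μ * tstar) * (u tstar - u t₁ * Real.exp (μ * Δ)) := by
        nlinarith [hintle]
      exact le_of_mul_le_mul_left h2 hEpos
    -- unfold Qtwo
    have hsgn : Real.sign (M - N) = -1 := Real.sign_of_neg (by linarith)
    simp only [Qtwo, hsgn, hDsymm, ← hΔdef]
    rw [show -(-1 : ℝ) * (N + μ / σ * u tstar) / D = (N - u t₁) / D by
      rw [hμσv]; ring]
    rw [show -μ * -1 * (N + μ / σ * u tstar) / D = μ * ((N - u t₁) / D) by
      rw [hμσv]; ring]
    by_cases hb : (N - u t₁) / D < Δ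
    · rw [if_pos hb]
      rw [sdde_Jcalc_lt μ D (u t₁) N Δ hμ0 hDpos hWmem.2 hb] at key
      have heq : μ / σ * u tstar * Real.exp (μ * Δ) -
            σ / μ * (-1 * (D / μ) * (Real.exp (μ * ((N - u t₁) / D)) - 1) +
              N * Real.exp (μ * Δ))
          = (u tstar - u t₁ * Real.exp (μ * Δ))
            - σ * ((N * Real.exp (μ * Δ) - u t₁) / μ
              - D / μ ^ 2 * (Real.exp (μ * ((N - u t₁) / D)) - 1)) := by
        linear_combination (Real.exp (μ * Δ) / σ - 1 / μ) * hWeq + u tstar * hμinv - Real.exp (μ * Δ) * u t₁ * hσinv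
      rw [heq]
      linarith [key]
    · rw [if_neg hb]
      rw [sdde_Jcalc_ge μ D (u t₁) N Δ hμ0 hDpos hΔ0 hb] at key
      have heq : u tstar * Real.exp (μ * Δ) * (1 + μ / σ) -
            -1 * (σ / μ) * D * ((1 / μ) * (Real.exp (μ * Δ) - 1) -
              Δ * Real.exp (μ * Δ))
          = (u tstar - u t₁ * Real.exp (μ * Δ))
            - σ * ((Real.exp (μ * Δ) * (u t₁ + D * Δ) - u t₁) / μ
              - D / μ ^ 2 * (Real.exp (μ * Δ) - 1)) := by
        linear_combination (Real.exp (μ * Δ) / σ + (Real.exp (μ * Δ) - 1) / μ) * hWeq + u tstar * (1 - Real.exp (μ * Δ)) * hμinv - Real.exp (μ * Δ) * u t₁ * hσinv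
      rw [heq]
      linarith [key]
  · -- case 0 < u tstar
    intro hv
    have hμσv : μ / σ * u tstar = -(u t₁) := by
      field_simp
      linarith [hWeq]
    have hgint : IntervalIntegrable
        (fun s => Real.exp (-μ * s) * (σ * -min (-M) (-(u t₁) + D * (tstar - s))))
        MeasureTheory.volume t₁ tstar := by
      apply Continuous.intervalIntegrable
      apply Continuous.mul (by fun_prop)
      apply continuous_const.mul
      apply Continuous.neg
      exact Continuous.min continuous_const (by fun_prop)
    have hptw : ∀ s ∈ Set.Icc t₁ tstar,
        Real.exp (-μ * s) * (σ * u (s - a - c * u s))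
          ≤ Real.exp (-μ * s) * (σ * -min (-M) (-(u t₁) + D * (tstar - s))) := by
      intro s hs
      have hlip := hwlip s hs
      have hmm : -min (-M) (-(u t₁) + D * (tstar - s))
          = max M (u t₁ - D * (tstar - s)) := by
        rw [show -(u t₁) + D * (tstar - s) = -(u t₁ - D * (tstar - s)) by ring,
          min_neg_neg, neg_neg]
      rw [hmm]
      have hwge : max M (u t₁ - D * (tstar - s)) ≤ u (s - a - c * u s) := by
        refine max_le (hwmem s hs).1 ?_
        linarith [abs_le.mp hlip |>.1]
      have h1 : σ * u (s - a - c * u s) ≤ σ * max M (u t₁ - D * (tstar - s)) :=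
        mul_le_mul_of_nonpos_left hwge hσ.le
      exact mul_le_mul_of_nonneg_left h1 (Real.exp_pos _).le
    have hintle := intervalIntegral.integral_mono_on ht₁le hfint hgint hptw
    have hsub : ∫ s in t₁..tstar,
        Real.exp (-μ * s) * (σ * -min (-M) (-(u t₁) + D * (tstar - s)))
        = -σ * Real.exp (-μ * tstar) *
          ∫ r in (0:ℝ)..Δ, Real.exp (μ * r) * min (-M) (-(u t₁) + D * r) := by
      have e : EqOn (fun s => Real.exp (-μ * s) * (σ * -min (-M) (-(u t₁) + D * (tstar - s))))
          (fun s => -σ * Real.exp (-μ * tstar) *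
            (Real.exp (μ * (tstar - s)) * min (-M) (-(u t₁) + D * (tstar - s))))
          (Set.uIcc t₁ tstar) := by
        intro s _
        have hx : Real.exp (-μ * tstar) * Real.exp (μ * (tstar - s))
            = Real.exp (-μ * s) := by
          rw [← Real.exp_add]; congr 1; ring
        simp only
        rw [← hx]; ring
      rw [intervalIntegral.integral_congr e, intervalIntegral.integral_const_mul]
      congr 1
      have hc2 := intervalIntegral.integral_comp_sub_left
        (fun r => Real.exp (μ * r) * min (-M) (-(u t₁) + D * r)) tstar (a := t₁) (b := tstar)
      rw [hc2, sub_self, show tstar - t₁ = Δ by rw [ht₁def]; ring]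
    rw [hvoc, hsub, hEE] at hintle
    have key : u tstar - u t₁ * Real.exp (μ * Δ)
        ≤ -σ * (∫ r in (0:ℝ)..Δ, Real.exp (μ * r) * min (-M) (-(u t₁) + D * r)) := by
      have h2 : Real.exp (-μ * tstar) * (u tstar - u t₁ * Real.exp (μ * Δ))
          ≤ Real.exp (-μ * tstar) * (-σ *
            (∫ r in (0:ℝ)..Δ, Real.exp (μ * r) * min (-M) (-(u t₁) + D * r))) := by
        nlinarith [hintle]
      exact le_of_mul_le_mul_left h2 hEpos
    have hsgn : Real.sign (N - M) = 1 := Real.sign_of_pos (by linarith)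
    simp only [Qtwo, hsgn, hDdef.symm, ← hΔdef]
    rw [show -(1 : ℝ) * (M + μ / σ * u tstar) / D = ((-M) - (-(u t₁))) / D by
      rw [hμσv]; ring]
    rw [show -μ * 1 * (M + μ / σ * u tstar) / D = μ * (((-M) - (-(u t₁))) / D) by
      rw [hμσv]; ring]
    have hWX : -(u t₁) ≤ -M := by linarith [hWmem.1]
    by_cases hb : ((-M) - (-(u t₁))) / D < Δ
    · rw [if_pos hb]
      rw [sdde_Jcalc_lt μ D (-(u t₁)) (-M) Δ hμ0 hDpos hWX hb] at key
      have heq : μ / σ * u tstar * Real.exp (μ * Δ) -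
            σ / μ * (1 * (D / μ) * (Real.exp (μ * (((-M) - (-(u t₁))) / D)) - 1) +
              M * Real.exp (μ * Δ))
          = (u tstar - u t₁ * Real.exp (μ * Δ))
            + σ * (((-M) * Real.exp (μ * Δ) - (-(u t₁))) / μ
              - D / μ ^ 2 * (Real.exp (μ * (((-M) - (-(u t₁))) / D)) - 1)) := by
        linear_combination (Real.exp (μ * Δ) / σ - 1 / μ) * hWeq + u tstar * hμinv - Real.exp (μ * Δ) * u t₁ * hσinv
      rw [heq]
      linarith [key]
    · rw [if_neg hb]
      rw [sdde_Jcalc_ge μ D (-(u t₁)) (-M) Δ hμ0 hDpos hΔ0 hb] at key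
      have heq : u tstar * Real.exp (μ * Δ) * (1 + μ / σ) -
            1 * (σ / μ) * D * ((1 / μ) * (Real.exp (μ * Δ) - 1) -
              Δ * Real.exp (μ * Δ))
          = (u tstar - u t₁ * Real.exp (μ * Δ))
            + σ * ((Real.exp (μ * Δ) * (-(u t₁) + D * Δ) - (-(u t₁))) / μ
              - D / μ ^ 2 * (Real.exp (μ * Δ) - 1)) := by
        linear_combination (Real.exp (μ * Δ) / σ + (Real.exp (μ * Δ) - 1) / μ) * hWeq + u tstar * (1 - Real.exp (μ * Δ)) * hμinv - Real.exp (μ * Δ) * u t₁ * hσinv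
      rw [heq]
      linarith [key]
end

section
/- (Negative root of Q₁.) Let a > 0, c > 0 and σ ≤ μ < 0, and let x ∈ (0, N₀]. Then there exists m ∈ [max{M₀, −σx/μ}, 0) such that Q₁(v, x) < 0 for all v < m, Q₁(m, x) = 0, and Q₁(v, x) > 0 for all v ∈ (m, 0]. -/
open Real Set Filter

/-- Negative root of `Q₁`. -/
theorem Qone_negative_root
    (a c μ σ x : ℝ)
    (ha : 0 < a) (hc : 0 < c) (hσμ : σ ≤ μ) (hμ : μ < 0)
    (hx : x ∈ Set.Ioc (0:ℝ) (Nzero a c μ σ)) :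
    ∃ m ∈ Set.Ico (max (Mzero a c) (-σ * x / μ)) (0:ℝ),
      (∀ v < m, Qone a c μ σ v x < 0) ∧
      Qone a c μ σ m x = 0 ∧
      (∀ v ∈ Set.Ioc m (0:ℝ), 0 < Qone a c μ σ v x) := by
  obtain ⟨hx0, hxN⟩ := hx
  have hσ : σ < 0 := lt_of_le_of_lt hσμ hμ
  have hμσ : 0 < μ / σ := div_pos_of_neg_of_neg hμ hσ
  have hσμ' : 0 < σ / μ := div_pos_of_neg_of_neg hσ hμ
  have hμc : μ * c < 0 := mul_neg_of_neg_of_pos hμ hc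
  set f : ℝ → ℝ := fun v => Qone a c μ σ v x with hfdef
  have hcont : Continuous f := by
    show Continuous fun v => Qone a c μ σ v x
    unfold Qone
    continuity
  have hD : ∀ v : ℝ, HasDerivAt f
      (1 + (μ/σ) * Real.exp (μ*(a+c*v)) + (μ/σ) * (Real.exp (μ*(a+c*v)) * (μ*c)) * v
        - (σ/μ) * x * (Real.exp (μ*(a+c*v)) * (μ*c))) v := by
    intro v
    have h1 : HasDerivAt (fun v : ℝ => μ*(a+c*v)) (μ*c) v := by
      simpa using (((hasDerivAt_id v).const_mul c).const_add a).const_mul μ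
    have hE : HasDerivAt (fun v : ℝ => Real.exp (μ*(a+c*v)))
        (Real.exp (μ*(a+c*v)) * (μ*c)) v := h1.exp
    have t2 : HasDerivAt (fun v : ℝ => (1 + (μ/σ) * Real.exp (μ*(a+c*v))) * v)
        (((μ/σ) * (Real.exp (μ*(a+c*v)) * (μ*c))) * v
          + (1 + (μ/σ) * Real.exp (μ*(a+c*v))) * 1) v :=
      ((hE.const_mul (μ/σ)).const_add 1).mul (hasDerivAt_id v)
    have t4 : HasDerivAt (fun v : ℝ => (σ/μ) * x * (1 - Real.exp (μ*(a+c*v))))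
        ((σ/μ) * x * (0 - Real.exp (μ*(a+c*v)) * (μ*c))) v :=
      ((hasDerivAt_const v (1:ℝ)).sub hE).const_mul ((σ/μ) * x)
    have := t2.add t4
    have heq : f = fun v : ℝ => (1 + (μ/σ) * Real.exp (μ*(a+c*v))) * v
        + (σ/μ) * x * (1 - Real.exp (μ*(a+c*v))) := by
      funext v; simp [hfdef, Qone]
    rw [heq]
    refine this.congr_deriv ?_
    ring
  have hmono : StrictMonoOn f (Set.Iic (0:ℝ)) := by
    apply strictMonoOn_of_deriv_pos (convex_Iic 0) hcont.continuousOn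
    intro v hv
    rw [interior_Iic] at hv
    rw [(hD v).deriv]
    have hE0 : (0:ℝ) < Real.exp (μ*(a+c*v)) := Real.exp_pos _
    have h2 : 0 < (μ*c) * v := mul_pos_of_neg_of_neg hμc hv
    nlinarith [mul_pos (mul_pos hμσ hE0) h2, mul_pos (mul_pos hσμ' hx0) (mul_pos hE0 (neg_pos.mpr hμc)), mul_pos hμσ hE0]
  -- values at the key points
  have hc0 : c ≠ 0 := ne_of_gt hc
  have hμ0 : μ ≠ 0 := ne_of_lt hμ
  have hσ0 : σ ≠ 0 := ne_of_lt hσ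
  have hM0neg : Mzero a c < 0 := by
    unfold Mzero
    exact div_neg_of_neg_of_pos (neg_neg_of_pos ha) hc
  have hV1neg : -σ * x / μ < 0 := by
    apply div_neg_of_pos_of_neg _ hμ
    exact mul_pos (neg_pos.mpr hσ) hx0
  have hfM0 : f (Mzero a c) < 0 := by
    have harg : μ * (a + c * Mzero a c) = 0 := by
      unfold Mzero; field_simp; ring
    show Qone a c μ σ (Mzero a c) x < 0
    unfold Qone
    rw [harg, Real.exp_zero]
    have : (1 + μ/σ * 1) * Mzero a c + σ/μ * x * (1-1) = (1 + μ/σ) * Mzero a c := by ring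
    rw [this]
    exact mul_neg_of_pos_of_neg (by linarith) hM0neg
  have hfV1 : f (-σ * x / μ) < 0 := by
    show Qone a c μ σ (-σ * x / μ) x < 0
    have key : Qone a c μ σ (-σ * x / μ) x
        = Real.exp (μ*(a + c*(-σ * x / μ))) * (-σ * x / μ) * (μ/σ + 1) := by
      unfold Qone
      field_simp
      ring
    rw [key]
    have hE0 : (0:ℝ) < Real.exp (μ*(a + c*(-σ * x / μ))) := Real.exp_pos _
    have : (0:ℝ) < μ/σ + 1 := by linarith
    exact mul_neg_of_neg_of_pos (mul_neg_of_pos_of_neg hE0 hV1neg) this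
  have hf0 : 0 < f 0 := by
    show 0 < Qone a c μ σ 0 x
    unfold Qone
    have hexp : Real.exp (μ * (a + c * 0)) < 1 := by
      rw [Real.exp_lt_one_iff]
      simp
      nlinarith
    nlinarith [mul_pos hσμ' hx0]
  set L : ℝ := max (Mzero a c) (-σ * x / μ) with hLdef
  have hL0 : L < 0 := max_lt hM0neg hV1neg
  have hfL : f L < 0 := by
    rcases max_cases (Mzero a c) (-σ * x / μ) with ⟨h, _⟩ | ⟨h, _⟩ <;> rw [hLdef, h]
    · exact hfM0
    · exact hfV1
  obtain ⟨m, hmmem, hfm⟩ := intermediate_value_Icc hL0.le hcont.continuousOn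
    (Set.mem_Icc.mpr ⟨hfL.le, hf0.le⟩)
  have hmI : m ∈ Set.Icc L 0 := hmmem
  have hm0 : m < 0 := by
    rcases lt_or_eq_of_le hmI.2 with h | h
    · exact h
    · exfalso; rw [h] at hfm; linarith
  refine ⟨m, ⟨hmI.1, hm0⟩, ?_, hfm, ?_⟩
  · intro v hv
    have : f v < f m := hmono (le_of_lt (hv.trans hm0)) hm0.le (by exact hv)
    rw [hfm] at this
    exact this
  · intro v hv
    have : f m < f v := hmono hm0.le hv.2 hv.1
    rw [hfm] at this
    exact this
end

section
/- (Monotonicity of the negative root of Q₁.) Let a > 0, c > 0 and σ ≤ μ < 0. Suppose 0 ≤ x₁ ≤ x₂ ≤ N₀ and m₁, m₂ ∈ [M₀, 0] satisfy Q₁(m₁, x₁) = 0 and Q₁(m₂, x₂) = 0. Then m₂ ≤ m₁. -/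
open Real Set Filter

/-- Monotonicity of the negative root of `Q₁`. -/
theorem Qone_negative_root_antitone
    (a c μ σ x₁ x₂ m₁ m₂ : ℝ)
    (ha : 0 < a) (hc : 0 < c) (hσμ : σ ≤ μ) (hμ : μ < 0)
    (hx1 : 0 ≤ x₁) (hx12 : x₁ ≤ x₂) (hx2 : x₂ ≤ Nzero a c μ σ)
    (hm1 : m₁ ∈ Set.Icc (Mzero a c) (0:ℝ)) (hm2 : m₂ ∈ Set.Icc (Mzero a c) (0:ℝ))
    (hQ1 : Qone a c μ σ m₁ x₁ = 0) (hQ2 : Qone a c μ σ m₂ x₂ = 0) :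
    m₂ ≤ m₁ := by
  have hσ : σ < 0 := lt_of_le_of_lt hσμ hμ
  set f : ℝ → ℝ := fun v => Qone a c μ σ v x₁ with hfdef
  have hderiv : ∀ v : ℝ, HasDerivAt f
      (1 + Real.exp (μ*(a+c*v)) * ((μ/σ)*(1 + μ*c*v) - σ*c*x₁)) v := by
    intro v
    have h1 : HasDerivAt (fun v : ℝ => μ*(a+c*v)) (μ*c) v := by
      simpa using (((hasDerivAt_id v).const_mul c).const_add a).const_mul μ
    have hg : HasDerivAt (fun v : ℝ => Real.exp (μ*(a+c*v)))
        (Real.exp (μ*(a+c*v)) * (μ*c)) v := h1.exp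
    have hA : HasDerivAt (fun v : ℝ => (1 + (μ/σ) * Real.exp (μ*(a+c*v))) * v)
        (((μ/σ) * (Real.exp (μ*(a+c*v)) * (μ*c))) * v
          + (1 + (μ/σ) * Real.exp (μ*(a+c*v))) * 1) v :=
      ((hg.const_mul (μ/σ)).const_add 1).mul (hasDerivAt_id v)
    have hB : HasDerivAt (fun v : ℝ => (σ/μ)*x₁*(1 - Real.exp (μ*(a+c*v))))
        ((σ/μ)*x₁*(0 - Real.exp (μ*(a+c*v)) * (μ*c))) v :=
      (((hasDerivAt_const v (1:ℝ)).sub hg)).const_mul ((σ/μ)*x₁)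
    have := hA.add hB
    have hcast : (((μ/σ) * (Real.exp (μ*(a+c*v)) * (μ*c))) * v
          + (1 + (μ/σ) * Real.exp (μ*(a+c*v))) * 1)
          + (σ/μ)*x₁*(0 - Real.exp (μ*(a+c*v)) * (μ*c))
        = 1 + Real.exp (μ*(a+c*v)) * ((μ/σ)*(1 + μ*c*v) - σ*c*x₁) := by
      field_simp [hμ.ne, hσ.ne]
      ring
    rw [hcast] at this
    exact this
  have hcont : Continuous f := by
    apply continuous_iff_continuousAt.mpr
    intro v
    exact (hderiv v).differentiableAt.continuousAt
  have hsm : StrictMonoOn f (Set.Icc (Mzero a c) 0) := by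
    apply strictMonoOn_of_deriv_pos (convex_Icc _ _) hcont.continuousOn
    intro v hv
    rw [interior_Icc] at hv
    rw [(hderiv v).deriv]
    have hE : 0 < Real.exp (μ*(a+c*v)) := Real.exp_pos _
    have hμσ : 0 < μ/σ := div_pos_of_neg_of_neg hμ hσ
    have hv0 : v < 0 := hv.2
    have h2 : 0 < 1 + μ*c*v := by nlinarith [mul_pos (mul_pos (neg_pos.mpr hμ) hc) (neg_pos.mpr hv0)]
    have h3 : σ*c*x₁ ≤ 0 := by nlinarith [mul_nonneg (mul_nonneg (neg_nonneg.mpr hσ.le) hc.le) hx1]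
    nlinarith [mul_pos hμσ h2]
  have hE2le : Real.exp (μ*(a + c*m₂)) ≤ 1 := by
    apply Real.exp_le_one_iff.mpr
    have h1 : -a/c ≤ m₂ := hm2.1
    have h2 : 0 ≤ a + c*m₂ := by
      have := (div_le_iff₀ hc).mp h1
      linarith
    nlinarith
  have hσμpos : 0 < σ/μ := div_pos_of_neg_of_neg hσ hμ
  have hfm2 : f m₂ ≤ f m₁ := by
    have hd : f m₂ - Qone a c μ σ m₂ x₂
        = (σ/μ) * (x₁ - x₂) * (1 - Real.exp (μ*(a + c*m₂))) := by
      simp only [hfdef, Qone]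
      ring
    have : f m₂ ≤ 0 := by
      rw [hQ2] at hd
      have h1 : (σ/μ) * (x₁ - x₂) * (1 - Real.exp (μ*(a + c*m₂))) ≤ 0 := by
        have := mul_nonneg (le_of_lt hσμpos) (sub_nonneg.mpr hE2le)
        nlinarith
      linarith
    have : f m₁ = 0 := hQ1
    linarith
  by_contra h
  push_neg at h
  exact absurd (hsm hm1 hm2 h) (not_lt.mpr hfm2)
end

section
/- (Positive root of Q₁.) Let a > 0, c > 0 and σ ≤ μ < 0, and let x ∈ [M₀, 0). Then there exists n ∈ (0, −σx/μ) such that Q₁(v, x) < 0 for all v ∈ [0, n), Q₁(n, x) = 0, and Q₁(v, x) > 0 for all v > n. -/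
open Real Set Filter Topology

/- ### Auxiliary log inequalities -/

lemma log_ineq_one {u : ℝ} (hu : 0 ≤ u) :
    Real.log (1 + u) ≤ u / (1 + u) + u ^ 2 / 2 := by
  set F : ℝ → ℝ := fun v => v / (1 + v) + v ^ 2 / 2 - Real.log (1 + v) with hF
  have hder : ∀ v ∈ Ici (0:ℝ), HasDerivAt F (v - v / (1 + v) ^ 2) v := by
    intro v hv
    have hv0 : (0:ℝ) ≤ v := hv
    have h1v : (1:ℝ) + v ≠ 0 := by positivity
    have d1 : HasDerivAt (fun w : ℝ => w / (1 + w))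
        ((1 * (1 + v) - v * 1) / (1 + v) ^ 2) v :=
      (hasDerivAt_id v).div ((hasDerivAt_id v).const_add 1) h1v
    have d2 : HasDerivAt (fun w : ℝ => w ^ 2 / 2) ((2 : ℕ) * v ^ 1 / 2) v :=
      (hasDerivAt_pow 2 v).div_const 2
    have d3 : HasDerivAt (fun w : ℝ => Real.log (1 + w)) (1 / (1 + v)) v :=
      ((hasDerivAt_id v).const_add 1).log h1v
    have := (d1.add d2).sub d3
    refine this.congr_deriv ?_
    field_simp
    ring
  have hmono : MonotoneOn F (Ici (0:ℝ)) := by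
    apply monotoneOn_of_deriv_nonneg (convex_Ici 0)
    · exact fun v hv => (hder v hv).continuousAt.continuousWithinAt
    · intro v hv
      rw [interior_Ici] at hv
      exact (hder v (mem_Ici.mpr (le_of_lt hv))).differentiableAt.differentiableWithinAt
    · intro v hv
      rw [interior_Ici] at hv
      rw [(hder v (mem_Ici.mpr (le_of_lt hv))).deriv]
      have hv0 : (0:ℝ) < v := hv
      have h1 : v / (1 + v) ^ 2 ≤ v := by
        rw [div_le_iff₀ (by nlinarith)]
        nlinarith [sq_nonneg v, mul_nonneg (mul_nonneg hv0.le hv0.le) hv0.le]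
      linarith
  have h0 : F 0 = 0 := by simp [hF]
  have := hmono (self_mem_Ici) hu hu
  rw [h0] at this
  simp only [hF] at this
  linarith

lemma log_ineq_two {t : ℝ} (h0 : 0 ≤ t) (h1 : t < 1) :
    -Real.log (1 - t) ≤ t / (1 - t) - t ^ 2 / 2 := by
  set G : ℝ → ℝ := fun v => v / (1 - v) - v ^ 2 / 2 + Real.log (1 - v) with hG
  have hder : ∀ v ∈ Ico (0:ℝ) 1,
      HasDerivAt G (v / (1 - v) ^ 2 - v) v := by
    intro v hv
    have h1v : (1:ℝ) - v ≠ 0 := by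
      have := hv.2; intro h; nlinarith
    have hpos : (0:ℝ) < 1 - v := by have := hv.2; linarith
    have d1 : HasDerivAt (fun w : ℝ => w / (1 - w))
        ((1 * (1 - v) - v * (-1)) / (1 - v) ^ 2) v :=
      (hasDerivAt_id v).div ((hasDerivAt_id v).const_sub 1) h1v
    have d2 : HasDerivAt (fun w : ℝ => w ^ 2 / 2) ((2 : ℕ) * v ^ 1 / 2) v :=
      (hasDerivAt_pow 2 v).div_const 2
    have d3 : HasDerivAt (fun w : ℝ => Real.log (1 - w)) ((-1) / (1 - v)) v :=
      ((hasDerivAt_id v).const_sub 1).log h1v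
    have := (d1.sub d2).add d3
    refine this.congr_deriv ?_
    field_simp
    ring
  have hmono : MonotoneOn G (Ico (0:ℝ) 1) := by
    apply monotoneOn_of_deriv_nonneg (convex_Ico 0 1)
    · exact fun v hv => (hder v hv).continuousAt.continuousWithinAt
    · intro v hv
      rw [interior_Ico] at hv
      exact (hder v ⟨hv.1.le, hv.2⟩).differentiableAt.differentiableWithinAt
    · intro v hv
      rw [interior_Ico] at hv
      rw [(hder v ⟨hv.1.le, hv.2⟩).deriv]
      have hpos : (0:ℝ) < 1 - v := by linarith [hv.2]
      have h2 : v ≤ v / (1 - v) ^ 2 := by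
        rw [le_div_iff₀ (by positivity)]
        nlinarith [hv.1.le, hv.2, mul_nonneg hv.1.le hv.1.le,
          mul_nonneg (mul_nonneg hv.1.le hv.1.le) hv.1.le]
      linarith
  have hG0 : G 0 = 0 := by simp [hG]
  have := hmono (by constructor <;> [rfl; norm_num] : (0:ℝ) ∈ Ico (0:ℝ) 1) ⟨h0, h1⟩ h0
  rw [hG0] at this
  simp only [hG] at this
  linarith

/- ### Sign propagation lemma -/

lemma pos_right_of_deriv_pos_at_zeros {g : ℝ → ℝ} (hg : Continuous g)
    (hd : ∀ z > (0:ℝ), g z = 0 → ∃ k > (0:ℝ), HasDerivAt g k z)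
    {n : ℝ} (hn : 0 < n) (hgn : g n = 0) : ∀ w > n, 0 < g w := by
  have slope_pos : ∀ z > (0:ℝ), g z = 0 →
      (∀ᶠ t in 𝓝[>] z, 0 < g t) ∧ (∀ᶠ t in 𝓝[<] z, g t < 0) := by
    intro z hz hgz
    obtain ⟨k, hk, hdk⟩ := hd z hz hgz
    have hs : Tendsto (slope g z) (𝓝[≠] z) (𝓝 k) :=
      hasDerivAt_iff_tendsto_slope.mp hdk
    have hev : ∀ᶠ t in 𝓝[≠] z, 0 < slope g z t :=
      hs.eventually (eventually_gt_nhds hk)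
    constructor
    · have hmono : 𝓝[>] z ≤ 𝓝[≠] z :=
        nhdsWithin_mono z (fun t ht => ne_of_gt ht)
      filter_upwards [hev.filter_mono hmono, self_mem_nhdsWithin] with t h1 h2
      have htz : (0:ℝ) < t - z := sub_pos.mpr h2
      have : slope g z t = g t / (t - z) := by
        rw [slope_def_field, hgz, sub_zero]
      rw [this] at h1
      rcases div_pos_iff.mp h1 with ⟨h, _⟩ | ⟨_, h⟩
      · exact h
      · linarith
    · have hmono : 𝓝[<] z ≤ 𝓝[≠] z :=
        nhdsWithin_mono z (fun t ht => ne_of_lt ht)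
      filter_upwards [hev.filter_mono hmono, self_mem_nhdsWithin] with t h1 h2
      have htz : t - z < 0 := sub_neg.mpr h2
      have : slope g z t = g t / (t - z) := by
        rw [slope_def_field, hgz, sub_zero]
      rw [this] at h1
      rcases div_pos_iff.mp h1 with ⟨_, h⟩ | ⟨h, _⟩
      · linarith
      · linarith
  intro w hw
  by_contra hle
  push_neg at hle
  obtain ⟨hright, _⟩ := slope_pos n hn hgn
  have hIoo : Ioo n w ∈ 𝓝[>] n := Ioo_mem_nhdsGT_of_mem ⟨le_refl n, hw⟩
  obtain ⟨t₀, hgt₀, ht₀⟩ := (hright.and (eventually_of_mem hIoo (fun t ht => ht))).exists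
  -- the set of points in [t₀, w] where g ≤ 0
  set Z2 : Set ℝ := Icc t₀ w ∩ g ⁻¹' (Iic 0) with hZ2
  have hZ2c : IsClosed Z2 := isClosed_Icc.inter (isClosed_Iic.preimage hg)
  have hwZ2 : w ∈ Z2 := ⟨⟨ht₀.2.le, le_refl w⟩, hle⟩
  have hbdd : BddBelow Z2 := ⟨t₀, fun t ht => ht.1.1⟩
  set z := sInf Z2 with hz_def
  have hzZ2 : z ∈ Z2 := hZ2c.csInf_mem ⟨w, hwZ2⟩ hbdd
  have ht₀z : t₀ < z := by
    rcases lt_or_eq_of_le hzZ2.1.1 with h | h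
    · exact h
    · exfalso; rw [h] at hgt₀; exact absurd hzZ2.2 (not_le.mpr hgt₀)
  have hposIco : ∀ t ∈ Ico t₀ z, 0 < g t := by
    intro t ht
    by_contra h
    push_neg at h
    have : t ∈ Z2 := ⟨⟨ht.1, le_trans ht.2.le hzZ2.1.2⟩, h⟩
    exact absurd (csInf_le hbdd this) (not_le.mpr ht.2)
  have hgz0 : g z = 0 := by
    refine le_antisymm hzZ2.2 ?_
    have htend : Tendsto g (𝓝[<] z) (𝓝 (g z)) :=
      (hg.tendsto z).mono_left nhdsWithin_le_nhds
    refine ge_of_tendsto htend ?_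
    filter_upwards [Ico_mem_nhdsLT_of_mem (⟨ht₀z, le_refl z⟩ : z ∈ Ioc t₀ z)] with t ht
    exact (hposIco t ht).le
  have hzpos : 0 < z := lt_trans (lt_trans hn ht₀.1) ht₀z
  obtain ⟨_, hleft⟩ := slope_pos z hzpos hgz0
  have hIco : Ico t₀ z ∈ 𝓝[<] z := Ico_mem_nhdsLT_of_mem ⟨ht₀z, le_refl z⟩
  obtain ⟨t, h1, h2⟩ := (hleft.and (eventually_of_mem hIco (fun t ht => ht))).exists
  exact absurd (hposIco t h2) (not_lt.mpr h1.le)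


/- ### Derivative of `Q₁` in `v`, and positivity at zeros -/

lemma Qone_hasDerivAt (a c μ σ x p : ℝ) (hD : σ / μ * x = -p) (v : ℝ) :
    HasDerivAt (fun w => (1 + μ / σ * Real.exp (μ * (a + c * w))) * w
        + σ / μ * x * (1 - Real.exp (μ * (a + c * w))))
      (1 + μ / σ * Real.exp (μ * (a + c * v))
        + μ * c * Real.exp (μ * (a + c * v)) * (μ / σ * v + p)) v := by
  have hEd : ∀ u : ℝ, HasDerivAt (fun w => Real.exp (μ * (a + c * w)))
      (μ * c * Real.exp (μ * (a + c * u))) u := by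
    intro u
    have h1 : HasDerivAt (fun w : ℝ => μ * (a + c * w)) (μ * c) u := by
      have := (((hasDerivAt_id u).const_mul c).const_add a).const_mul μ
      simpa using this
    have := h1.exp
    convert this using 1
    ring
  have t1 : HasDerivAt (fun w => (1 + μ / σ * Real.exp (μ * (a + c * w))) * w)
      ((μ / σ * (μ * c * Real.exp (μ * (a + c * v)))) * v
        + (1 + μ / σ * Real.exp (μ * (a + c * v))) * 1) v :=
    (((hEd v).const_mul (μ / σ)).const_add 1).mul (hasDerivAt_id v)
  have t2 : HasDerivAt (fun w => σ / μ * x * (1 - Real.exp (μ * (a + c * w))))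
      (σ / μ * x * (0 - μ * c * Real.exp (μ * (a + c * v)))) v :=
    ((hasDerivAt_const v (1:ℝ)).sub (hEd v)).const_mul (σ / μ * x)
  have hsum := t1.add t2
  refine hsum.congr_deriv (Eq.symm ?_)
  linear_combination (μ * c * Real.exp (μ * (a + c * v))) * hD

lemma Qone_deriv_pos_at_zero (a c μ σ x p : ℝ) (ha : 0 < a)
    (hμ : μ < 0) (hB0 : 0 < μ / σ) (hB1 : μ / σ ≤ 1) (hp0 : 0 < p)
    (hD : σ / μ * x = -p) {z : ℝ} (hz : 0 < z)
    (hgz' : (1 + μ / σ * Real.exp (μ * (a + c * z))) * z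
      + σ / μ * x * (1 - Real.exp (μ * (a + c * z))) = 0) :
    z < p ∧ 0 < 1 + μ / σ * Real.exp (μ * (a + c * z))
      + μ * c * Real.exp (μ * (a + c * z)) * (μ / σ * z + p) := by
  obtain ⟨E, hE_def⟩ : ∃ E : ℝ, E = Real.exp (μ * (a + c * z)) := ⟨_, rfl⟩
  rw [← hE_def] at hgz' ⊢
  have hE : 0 < E := hE_def ▸ Real.exp_pos _
  have hrel : E * (μ / σ * z + p) = p - z := by
    linear_combination hgz' + (E - 1) * hD
  have hBzp : 0 < μ / σ * z + p := add_pos (mul_pos hB0 hz) hp0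
  have hpz : 0 < p - z := by
    rw [← hrel]; exact mul_pos hE hBzp
  have hzp : z < p := by linarith
  refine ⟨hzp, ?_⟩
  have hEeq : E = (p - z) / (μ / σ * z + p) := by
    rw [eq_div_iff hBzp.ne']
    exact hrel
  have hlogE : μ * (a + c * z) = Real.log (p - z) - Real.log (μ / σ * z + p) := by
    have h1 : Real.log E = μ * (a + c * z) := by rw [hE_def, Real.log_exp]
    rw [← h1, hEeq, Real.log_div hpz.ne' hBzp.ne']
  obtain ⟨L, hL_def⟩ : ∃ L : ℝ, L = Real.log (μ / σ * z + p) - Real.log (p - z) :=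
    ⟨_, rfl⟩
  have hσ0 : σ ≠ 0 := by
    intro h
    rw [h, div_zero] at hB0
    exact lt_irrefl 0 hB0
  have hLle : L ≤ μ / σ * z / (μ / σ * z + p) + z / (p - z) := by
    have hu : 0 ≤ μ / σ * z / p := by positivity
    have i1 := log_ineq_one hu
    have ht0 : 0 ≤ z / p := by positivity
    have ht1 : z / p < 1 := (div_lt_one hp0).mpr hzp
    have i2 := log_ineq_two ht0 ht1
    have e1 : 1 + μ / σ * z / p = (μ / σ * z + p) / p := by
      field_simp [hp0.ne', hσ0]
      ring
    have e2 : (1:ℝ) - z / p = (p - z) / p := by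
      field_simp [hp0.ne']
    have e3 : Real.log ((μ / σ * z + p) / p) = Real.log (μ / σ * z + p) - Real.log p :=
      Real.log_div hBzp.ne' hp0.ne'
    have e4 : Real.log ((p - z) / p) = Real.log (p - z) - Real.log p :=
      Real.log_div hpz.ne' hp0.ne'
    rw [e1, e3] at i1
    rw [e2, e4] at i2
    have e5 : μ / σ * z / p / ((μ / σ * z + p) / p) = μ / σ * z / (μ / σ * z + p) :=
      div_div_div_cancel_right₀ hp0.ne' _ _
    have e6 : z / p / ((p - z) / p) = z / (p - z) :=
      div_div_div_cancel_right₀ hp0.ne' _ _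
    rw [e5] at i1
    rw [e6] at i2
    have hsq : (μ / σ * z / p) ^ 2 ≤ (z / p) ^ 2 := by
      have h2 : μ / σ * z / p ≤ z / p := by
        apply div_le_div_of_nonneg_right _ hp0.le
        nlinarith [mul_nonneg (sub_nonneg.mpr hB1) hz.le]
      exact pow_le_pow_left₀ hu h2 2
    rw [hL_def]
    linarith
  have hμa : μ * a < 0 := mul_neg_of_neg_of_pos hμ ha
  have hmuc : μ * c * z = -L - μ * a := by
    have h : μ * (a + c * z) = -L := by rw [hlogE, hL_def]; ring
    linear_combination h
  have h7 : L * (p - z) ≤ z * (1 + μ / σ * E) := by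
    have h8 := mul_le_mul_of_nonneg_right hLle hpz.le
    have h9 : (μ / σ * z / (μ / σ * z + p) + z / (p - z)) * (p - z)
        = z * (1 + μ / σ * E) := by
      have hne2 : μ * z + p * σ ≠ 0 := by
        intro h
        apply hBzp.ne'
        field_simp [hσ0]
        linear_combination h
      rw [hEeq]
      field_simp [hσ0, hne2, hpz.ne']
      ring
    linarith [h9 ▸ h8]
  have h10 : 0 < (1 + μ / σ * E + μ * c * E * (μ / σ * z + p)) * z := by
    have hrw : μ * c * E * (μ / σ * z + p) = μ * c * (p - z) := by
      rw [show μ * c * E * (μ / σ * z + p) = μ * c * (E * (μ / σ * z + p)) from by ring,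
        hrel]
    rw [hrw]
    have hterm : 0 < -(μ * a) * (p - z) := mul_pos (by linarith) hpz
    have h11 : μ * c * (p - z) * z = (-L - μ * a) * (p - z) := by
      rw [← hmuc]; ring
    nlinarith [h7, hterm]
  rcases mul_pos_iff.mp h10 with ⟨h, _⟩ | ⟨_, h⟩
  · exact h
  · linarith

/-- Positive root of `Q₁`. -/
theorem Qone_positive_root
    (a c μ σ x : ℝ)
    (ha : 0 < a) (hc : 0 < c) (hσμ : σ ≤ μ) (hμ : μ < 0)
    (hx : x ∈ Set.Ico (Mzero a c) (0:ℝ)) :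
    ∃ n ∈ Set.Ioo (0:ℝ) (-σ * x / μ),
      (∀ v ∈ Set.Ico (0:ℝ) n, Qone a c μ σ v x < 0) ∧
      Qone a c μ σ n x = 0 ∧
      (∀ v > n, 0 < Qone a c μ σ v x) := by
  have hσ : σ < 0 := lt_of_le_of_lt hσμ hμ
  have hx0 : x < 0 := hx.2
  obtain ⟨p, hp_def⟩ : ∃ p : ℝ, p = -σ * x / μ := ⟨_, rfl⟩
  have hp0 : 0 < p := by
    rw [hp_def]
    apply div_pos_of_neg_of_neg _ hμ
    have : 0 < -σ := neg_pos.mpr hσ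
    exact mul_neg_of_pos_of_neg this hx0
  have hB0 : 0 < μ / σ := div_pos_of_neg_of_neg hμ hσ
  have hB1 : μ / σ ≤ 1 := by
    rw [div_le_one_iff]
    right; right
    exact ⟨hσ, hσμ⟩
  have hD : σ / μ * x = -p := by
    rw [hp_def]
    field_simp
  obtain ⟨g, hg_def⟩ : ∃ g : ℝ → ℝ, g = fun v => Qone a c μ σ v x := ⟨_, rfl⟩
  have hgv : ∀ v, g v = (1 + μ / σ * Real.exp (μ * (a + c * v))) * v
      + σ / μ * x * (1 - Real.exp (μ * (a + c * v))) := by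
    intro v; rw [hg_def]; rfl
  have hgcont : Continuous g := by
    rw [hg_def]
    unfold Qone
    continuity
  -- g 0 < 0
  have hg0 : g 0 < 0 := by
    have hE1 : Real.exp (μ * (a + c * 0)) < 1 := by
      rw [Real.exp_lt_one_iff]
      have : 0 < a + c * 0 := by linarith
      exact mul_neg_of_neg_of_pos hμ this
    have h1 : g 0 = σ / μ * x * (1 - Real.exp (μ * (a + c * 0))) := by
      rw [hgv]; ring
    rw [h1, hD]
    have : 0 < 1 - Real.exp (μ * (a + c * 0)) := by linarith
    exact mul_neg_of_neg_of_pos (neg_neg_iff_pos.mpr hp0) this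
  -- g p > 0
  have hgp : 0 < g p := by
    have h1 : g p = p * Real.exp (μ * (a + c * p)) * (μ / σ + 1) := by
      rw [hgv]
      linear_combination (1 - Real.exp (μ * (a + c * p))) * hD
    rw [h1]
    have : 0 < μ / σ + 1 := by linarith
    positivity
  have hgd : ∀ v : ℝ, HasDerivAt g
      (1 + μ / σ * Real.exp (μ * (a + c * v))
        + μ * c * Real.exp (μ * (a + c * v)) * (μ / σ * v + p)) v := by
    intro v
    have hfun : g = fun w => (1 + μ / σ * Real.exp (μ * (a + c * w))) * w
        + σ / μ * x * (1 - Real.exp (μ * (a + c * w))) := by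
      funext w; exact hgv w
    rw [hfun]
    exact Qone_hasDerivAt a c μ σ x p hD v
  have hzero : ∀ z > (0:ℝ), g z = 0 → z < p ∧ ∃ k > (0:ℝ), HasDerivAt g k z := by
    intro z hz hgz
    have hgz' : (1 + μ / σ * Real.exp (μ * (a + c * z))) * z
        + σ / μ * x * (1 - Real.exp (μ * (a + c * z))) = 0 := by
      rw [← hgv]; exact hgz
    obtain ⟨hzp, hpos⟩ :=
      Qone_deriv_pos_at_zero a c μ σ x p ha hμ hB0 hB1 hp0 hD hz hgz'
    exact ⟨hzp, _, hpos, hgd z⟩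
  -- the set of zeros of g in [0, p]
  obtain ⟨Z, hZ_def⟩ : ∃ Z : Set ℝ, Z = Icc 0 p ∩ g ⁻¹' {0} := ⟨_, rfl⟩
  have hZc : IsClosed Z := by
    rw [hZ_def]; exact isClosed_Icc.inter (isClosed_singleton.preimage hgcont)
  have hZne : Z.Nonempty := by
    have hmem : (0:ℝ) ∈ Icc (g 0) (g p) := ⟨hg0.le, hgp.le⟩
    obtain ⟨w, hw1, hw2⟩ := intermediate_value_Icc hp0.le hgcont.continuousOn hmem
    exact ⟨w, by rw [hZ_def]; exact ⟨hw1, hw2⟩⟩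
  have hbdd : BddBelow Z := ⟨0, fun t ht => by rw [hZ_def] at ht; exact ht.1.1⟩
  obtain ⟨n, hn_def⟩ : ∃ n : ℝ, n = sInf Z := ⟨_, rfl⟩
  have hnZ : n ∈ Z := by rw [hn_def]; exact hZc.csInf_mem hZne hbdd
  rw [hZ_def] at hnZ
  have hgn : g n = 0 := hnZ.2
  have hn0 : 0 < n := by
    rcases lt_or_eq_of_le hnZ.1.1 with h | h
    · exact h
    · exfalso; rw [← h] at hgn; linarith [hg0, hgn.le]
  have hnp : n < p := (hzero n hn0 hgn).1
  have hgoal1 : ∀ v ∈ Ico (0:ℝ) n, g v < 0 := by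
    intro v hv
    by_contra h
    push_neg at h
    have hv0 : (0:ℝ) ≤ v := hv.1
    have hvn : v < n := hv.2
    have hmem : (0:ℝ) ∈ Icc (g 0) (g v) := ⟨hg0.le, h⟩
    obtain ⟨w, hw1, hw2⟩ := intermediate_value_Icc hv0 hgcont.continuousOn hmem
    have hwZ : w ∈ Z := by
      rw [hZ_def]
      exact ⟨⟨hw1.1, le_trans hw1.2 (le_trans hvn.le hnp.le)⟩, hw2⟩
    have h1 := csInf_le hbdd hwZ
    rw [← hn_def] at h1
    have : n ≤ v := le_trans h1 hw1.2
    linarith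
  have hgoal3 : ∀ v > n, 0 < g v :=
    pos_right_of_deriv_pos_at_zeros hgcont
      (fun z hz hgz => (hzero z hz hgz).2) hn0 hgn
  rw [hp_def] at hnp
  refine ⟨n, ⟨hn0, hnp⟩, ?_, ?_, ?_⟩
  · intro v hv
    have := hgoal1 v hv
    rwa [hg_def] at this
  · rw [← hgn, hg_def]
  · intro v hv
    have := hgoal3 v hv
    rwa [hg_def] at this
end

section
/- (Monotonicity of the positive root of Q₁.) Let a > 0, c > 0 and σ ≤ μ < 0. Suppose M₀ ≤ x₁ ≤ x₂ ≤ 0 and n₁, n₂ ∈ [0, N₀] satisfy Q₁(n₁, x₁) = 0 and Q₁(n₂, x₂) = 0. Then n₂ ≤ n₁. -/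
open Real Set Filter

-- sinh-type inequality
lemma aux_sinh (w : ℝ) (hw : 0 < w) : 2*w < Real.exp w - Real.exp (-w) := by
  have h := Real.self_lt_sinh_iff.2 hw
  rw [Real.sinh_eq] at h
  linarith

-- key inequality: for 0 < k ≤ 1, w > 0, E = exp(-w):
-- w*(1+k)*E < (1 + k*E)*(1 - E)
lemma aux_key (k w : ℝ) (hk0 : 0 < k) (hk1 : k ≤ 1) (hw : 0 < w) :
    w * (1+k) * Real.exp (-w) < (1 + k * Real.exp (-w)) * (1 - Real.exp (-w)) := by
  set E := Real.exp (-w) with hE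
  have hEpos : 0 < E := Real.exp_pos _
  have hprod : Real.exp w * E = 1 := by
    rw [hE, ← Real.exp_add]; simp
  have h1 : 1 - w ≤ E := by
    have := Real.add_one_le_exp (-w); linarith
  have h2 : 0 < 1 - E^2 - 2*w*E := by
    have h3 := aux_sinh w hw
    nlinarith [mul_pos (by linarith : (0:ℝ) < Real.exp w - E - 2*w) hEpos]
  nlinarith [mul_nonneg (mul_nonneg hEpos.le (by linarith : (0:ℝ) ≤ 1 - k)) (by linarith : (0:ℝ) ≤ E - 1 + w)]

noncomputable def Gaux (a c μ σ v : ℝ) : ℝ :=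
  (μ/σ) * v * (1 + (μ/σ) * Real.exp (μ*(a+c*v))) / (1 - Real.exp (μ*(a+c*v)))

lemma Gaux_hasDeriv (a c μ σ v : ℝ) (hne : 1 - Real.exp (μ*(a+c*v)) ≠ 0) :
    HasDerivAt (Gaux a c μ σ)
      ((((μ/σ) * (1 + (μ/σ) * Real.exp (μ*(a+c*v))) +
          (μ/σ) * v * ((μ/σ) * (Real.exp (μ*(a+c*v)) * (μ*c)))) * (1 - Real.exp (μ*(a+c*v))) -
        (μ/σ) * v * (1 + (μ/σ) * Real.exp (μ*(a+c*v))) * (-(Real.exp (μ*(a+c*v)) * (μ*c)))) /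
        (1 - Real.exp (μ*(a+c*v)))^2) v := by
  have haff : HasDerivAt (fun v : ℝ => μ*(a+c*v)) (μ*c) v := by
    simpa using (((hasDerivAt_id v).const_mul c).const_add a).const_mul μ
  have hE : HasDerivAt (fun v : ℝ => Real.exp (μ*(a+c*v)))
      (Real.exp (μ*(a+c*v)) * (μ*c)) v := haff.exp
  have hN : HasDerivAt (fun v : ℝ => (μ/σ) * v * (1 + (μ/σ) * Real.exp (μ*(a+c*v))))
      ((μ/σ) * (1 + (μ/σ) * Real.exp (μ*(a+c*v))) +
        (μ/σ) * v * ((μ/σ) * (Real.exp (μ*(a+c*v)) * (μ*c)))) v := by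
    have h1 : HasDerivAt (fun v : ℝ => (μ/σ) * v) (μ/σ) v := by
      simpa using (hasDerivAt_id v).const_mul (μ/σ)
    have h2 : HasDerivAt (fun v : ℝ => 1 + (μ/σ) * Real.exp (μ*(a+c*v)))
        ((μ/σ) * (Real.exp (μ*(a+c*v)) * (μ*c))) v := (hE.const_mul _).const_add 1
    exact h1.mul h2
  have hD : HasDerivAt (fun v : ℝ => 1 - Real.exp (μ*(a+c*v)))
      (-(Real.exp (μ*(a+c*v)) * (μ*c))) v := hE.const_sub 1
  exact hN.div hD hne

lemma Gaux_strictMono (a c μ σ : ℝ) (ha : 0 < a) (hc : 0 < c) (hσμ : σ ≤ μ) (hμ : μ < 0) :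
    StrictMonoOn (Gaux a c μ σ) (Set.Ici 0) := by
  have hσ : σ < 0 := lt_of_le_of_lt hσμ hμ
  have hk0 : 0 < μ/σ := div_pos_of_neg_of_neg hμ hσ
  have hk1 : μ/σ ≤ 1 := by
    rw [div_le_one_iff]; exact Or.inr (Or.inr ⟨hσ, hσμ⟩)
  have hElt : ∀ v : ℝ, 0 ≤ v → Real.exp (μ*(a+c*v)) < 1 := by
    intro v hv
    rw [Real.exp_lt_one_iff]
    have : 0 < a + c*v := by nlinarith
    nlinarith
  apply strictMonoOn_of_deriv_pos (convex_Ici 0)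
  · apply ContinuousOn.div
    · fun_prop
    · fun_prop
    · intro v hv
      have := hElt v hv
      intro h; linarith
  · intro v hv
    rw [interior_Ici] at hv
    have hv0 : 0 < v := hv
    set E := Real.exp (μ*(a+c*v)) with hEdef
    have hE1 : E < 1 := hElt v hv0.le
    have hEpos : 0 < E := Real.exp_pos _
    have hne : 1 - E ≠ 0 := by linarith
    rw [(Gaux_hasDeriv a c μ σ v hne).deriv]
    apply div_pos
    · -- numerator positivity from aux_key
      set k := μ/σ with hk
      have hacv : 0 < a + c*v := by nlinarith
      have hw : 0 < -(μ*(a+c*v)) := by nlinarith [mul_neg_of_neg_of_pos hμ hacv]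
      have hkey := aux_key k (-(μ*(a+c*v))) hk0 hk1 hw
      rw [Real.exp_neg, ← Real.exp_neg, neg_neg, ← hEdef] at hkey
      -- hkey : -(μ*(a+c*v)) * (1+k) * E < (1 + k*E)*(1-E)
      -- numerator = k * ((1+k*E)*(1-E) + μ*c*v*E*(1+k))
      have hstep : -(μ*c*v) ≤ -(μ*(a+c*v)) := by nlinarith
      have hpos : 0 < (1 + k*E)*(1-E) + μ*c*v*E*(1+k) := by nlinarith [mul_pos hEpos (by linarith : (0:ℝ) < 1+k)]
      nlinarith [hpos]
    · positivity

lemma Qone_root_eq (a c μ σ n x : ℝ) (ha : 0 < a) (hc : 0 < c) (hσμ : σ ≤ μ) (hμ : μ < 0)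
    (hn : 0 ≤ n) (hQ : Qone a c μ σ n x = 0) : x = -Gaux a c μ σ n := by
  have hσ : σ < 0 := lt_of_le_of_lt hσμ hμ
  have hE1 : Real.exp (μ*(a+c*n)) < 1 := by
    rw [Real.exp_lt_one_iff]
    have hacv : 0 < a + c*n := by nlinarith
    nlinarith [mul_neg_of_neg_of_pos hμ hacv]
  have hne : 1 - Real.exp (μ*(a+c*n)) ≠ 0 := by linarith
  unfold Qone at hQ
  unfold Gaux
  have hσ' : σ ≠ 0 := hσ.ne
  have hμ' : μ ≠ 0 := hμ.ne
  field_simp [hσ', hμ', hne] at hQ ⊢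
  linear_combination hQ

/-- Monotonicity of the positive root of `Q₁`. -/
theorem Qone_positive_root_antitone
    (a c μ σ x₁ x₂ n₁ n₂ : ℝ)
    (ha : 0 < a) (hc : 0 < c) (hσμ : σ ≤ μ) (hμ : μ < 0)
    (hx1 : Mzero a c ≤ x₁) (hx12 : x₁ ≤ x₂) (hx2 : x₂ ≤ 0)
    (hn1 : n₁ ∈ Set.Icc (0:ℝ) (Nzero a c μ σ))
    (hn2 : n₂ ∈ Set.Icc (0:ℝ) (Nzero a c μ σ))
    (hQ1 : Qone a c μ σ n₁ x₁ = 0) (hQ2 : Qone a c μ σ n₂ x₂ = 0) :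
    n₂ ≤ n₁ := by
  have h1 := Qone_root_eq a c μ σ n₁ x₁ ha hc hσμ hμ hn1.1 hQ1
  have h2 := Qone_root_eq a c μ σ n₂ x₂ ha hc hσμ hμ hn2.1 hQ2
  by_contra h
  push_neg at h
  have := Gaux_strictMono a c μ σ ha hc hσμ hμ hn1.1 (hn1.1.trans h.le) h
  linarith [h1, h2, this]
end
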